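/- arXiv:1911.09175 — 8 statements merged into one kernel-verified Lean document; each statement's English description precedes it below -/
import Mathlib

section
/- If x_i(0) ∈ [0,1] for all i, then the trajectory of the discrete-time SIS system x(k+1) = x(k) + h((I - X(k))B̄(k) - D(k))x(k) satisfies x_i(k) ∈ [0,1] for all i and all k ≥ 0. -/
open Matrix Filter

noncomputable def specRad {m : Type*} [Fintype m] [DecidableEq m] (M : Matrix m m ℝ) : ℝ :=
  sSup {r : ℝ | ∃ μ ∈ spectrum ℂ (M.map (algebraMap ℝ ℂ)), r = ‖μ‖}

noncomputable def mono {n : ℕ} (p : ℕ) (M : ℕ → Matrix (Fin n) (Fin n) ℝ) (k : ℕ) :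
    Matrix (Fin n) (Fin n) ℝ :=
  (List.range p).foldl (fun A i => M (k + i) * A) 1

def SISdyn {n : ℕ} (h : ℝ) (β : ℕ → Fin n → Fin n → ℝ) (δ : ℕ → Fin n → ℝ)
    (x : ℕ → Fin n → ℝ) : Prop :=
  ∀ k i, x (k + 1) i = x k i + h * ((1 - x k i) * (∑ j, β k i j * x k j) - δ k i * x k i)

def MatIrreducible {n : ℕ} (M : Matrix (Fin n) (Fin n) ℝ) : Prop :=
  ∀ S : Set (Fin n), S.Nonempty → Sᶜ.Nonempty → ∃ i ∈ S, ∃ j ∈ Sᶜ, M i j ≠ 0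

theorem stmt0 {n : ℕ} (h : ℝ) (β : ℕ → Fin n → Fin n → ℝ) (δ : ℕ → Fin n → ℝ)
    (x : ℕ → Fin n → ℝ) (hh : 0 < h)
    (hδ0 : ∀ k i, 0 ≤ δ k i) (hβ0 : ∀ k i j, 0 ≤ β k i j)
    (hδ1 : ∀ k i, h * δ k i ≤ 1) (hβ1 : ∀ k i, h * ∑ j, β k i j ≤ 1)
    (hdyn : SISdyn h β δ x) (h0 : ∀ i, x 0 i ∈ Set.Icc (0:ℝ) 1) :
    ∀ k i, x k i ∈ Set.Icc (0:ℝ) 1 := by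
  intro k
  induction k with
  | zero => exact h0
  | succ k ih =>
    intro i
    have hx0 : 0 ≤ x k i := (ih i).1
    have hx1 : x k i ≤ 1 := (ih i).2
    have hS0 : 0 ≤ ∑ j, β k i j * x k j :=
      Finset.sum_nonneg fun j _ => mul_nonneg (hβ0 k i j) (ih j).1
    have hSle : ∑ j, β k i j * x k j ≤ ∑ j, β k i j :=
      Finset.sum_le_sum fun j _ => by
        nlinarith [(ih j).1, (ih j).2, hβ0 k i j]
    have hhS : h * ∑ j, β k i j * x k j ≤ 1 :=
      le_trans (by nlinarith) (hβ1 k i)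
    have hrw := hdyn k i
    rw [hrw]
    constructor
    · nlinarith [mul_nonneg (sub_nonneg.2 (hδ1 k i)) hx0,
        mul_nonneg (mul_nonneg hh.le hS0) (sub_nonneg.2 hx1)]
    · nlinarith [mul_nonneg (sub_nonneg.2 hx1) (sub_nonneg.2 hhS),
        mul_nonneg (mul_nonneg hh.le (hδ0 k i)) hx0]
end

section
/- If M is an entrywise nonnegative square real matrix with spectral radius ρ(M) < 1, then there exists a diagonal matrix P with strictly positive diagonal entries such that MᵀPM - P is negative definite. -/
set_option maxHeartbeats 1000000
set_option synthInstance.maxHeartbeats 200000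


open Matrix Filter

section Aux

attribute [local instance] Matrix.linftyOpNormedRing Matrix.linftyOpNormedAlgebra

variable {n : ℕ}

lemma rowsum_le_norm (B : Matrix (Fin n) (Fin n) ℂ) (i : Fin n) : ∑ j, ‖B i j‖ ≤ ‖B‖ := by
  have h : (∑ j, ‖B i j‖₊) ≤ ‖B‖₊ := by
    rw [Matrix.linfty_opNNNorm_def]
    exact Finset.le_sup (f := fun i => ∑ j, ‖B i j‖₊) (Finset.mem_univ i)
  calc ∑ j, ‖B i j‖ = ((∑ j, ‖B i j‖₊ : NNReal) : ℝ) := by push_cast; rfl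
    _ ≤ ‖B‖ := by exact_mod_cast h

lemma pow_entry_nonneg (M : Matrix (Fin n) (Fin n) ℝ) (hM : ∀ i j, 0 ≤ M i j) :
    ∀ k i j, 0 ≤ (M ^ k) i j := by
  intro k
  induction k with
  | zero =>
    intro i j
    rw [pow_zero, Matrix.one_apply]
    split <;> norm_num
  | succ k ih =>
    intro i j
    rw [pow_succ, Matrix.mul_apply]
    exact Finset.sum_nonneg fun l _ => mul_nonneg (ih i l) (hM l j)

lemma exists_contraction_vector (M : Matrix (Fin n) (Fin n) ℝ)
    (hM : ∀ i j, 0 ≤ M i j) (hρ : specRad M < 1) :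
    ∃ lam : ℝ, ∃ v : Fin n → ℝ, 0 < lam ∧ lam < 1 ∧ (∀ i, 0 < v i) ∧
      ∀ i, ∑ j, M i j * v j ≤ lam * v i := by
  classical
  set A : Matrix (Fin n) (Fin n) ℂ := M.map (algebraMap ℝ ℂ) with hA
  haveI : CompleteSpace (Matrix (Fin n) (Fin n) ℂ) :=
    FiniteDimensional.complete ℂ (Matrix (Fin n) (Fin n) ℂ)
  set ρ₀ : ℝ := max (specRad M) 0 with hρ₀def
  have hρ₀0 : 0 ≤ ρ₀ := le_max_right _ _
  have hρ₀1 : ρ₀ < 1 := max_lt hρ one_pos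
  set c : ℝ := (ρ₀ + 1) / 2 with hcdef
  set lam : ℝ := (ρ₀ + 3) / 4 with hlamdef
  have hc0 : 0 < c := by rw [hcdef]; linarith
  have hclam : c < lam := by rw [hcdef, hlamdef]; linarith
  have hlam1 : lam < 1 := by rw [hlamdef]; linarith
  have hlam0 : 0 < lam := lt_trans hc0 hclam
  have hρ₀c : ρ₀ < c := by rw [hcdef]; linarith
  -- bound on spectralRadius
  have hbdd : BddAbove {r : ℝ | ∃ μ ∈ spectrum ℂ A, r = ‖μ‖} := by
    refine ⟨‖A‖ * ‖(1 : Matrix (Fin n) (Fin n) ℂ)‖, ?_⟩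
    rintro r ⟨μ, hμ, rfl⟩
    have h2 : ‖μ‖ ≤ ‖A‖ * ‖(1 : Matrix (Fin n) (Fin n) ℂ)‖ :=
      spectrum.norm_le_norm_mul_of_mem hμ
    exact h2
  have hsr : spectralRadius ℂ A ≤ ENNReal.ofReal ρ₀ := by
    rw [spectralRadius]
    refine iSup₂_le fun μ hμ => ?_
    have h1 : ‖μ‖ ≤ specRad M := le_csSup hbdd ⟨μ, hμ, rfl⟩
    have h2 : ‖μ‖ ≤ ρ₀ := by
      exact le_trans h1 (le_max_left _ _)
    calc (‖μ‖₊ : ENNReal) = ENNReal.ofReal ‖μ‖ := by rw [← ENNReal.ofReal_coe_nnreal, coe_nnnorm]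
      _ ≤ ENNReal.ofReal ρ₀ := ENNReal.ofReal_le_ofReal h2
  have hcc : spectralRadius ℂ A < ENNReal.ofReal c :=
    lt_of_le_of_lt hsr ((ENNReal.ofReal_lt_ofReal_iff hc0).mpr hρ₀c)
  have hgel := spectrum.pow_nnnorm_pow_one_div_tendsto_nhds_spectralRadius A
  have hev : ∀ᶠ (k : ℕ) in atTop, ((‖A ^ k‖₊ : ENNReal)) ^ (1 / (k : ℝ)) < ENNReal.ofReal c :=
    hgel.eventually_lt_const hcc
  obtain ⟨K, hK⟩ := eventually_atTop.mp (hev.and (eventually_ge_atTop 1))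
  have hpow : ∀ k ≥ K, ‖A ^ k‖ ≤ c ^ k := by
    intro k hk
    obtain ⟨h1, h2⟩ := hK k hk
    have hk0 : (k : ℝ) ≠ 0 := Nat.cast_ne_zero.mpr (by omega)
    have h3 := ENNReal.rpow_le_rpow h1.le (le_of_lt (by positivity : (0:ℝ) < (k:ℝ)))
    rw [← ENNReal.rpow_mul, one_div, inv_mul_cancel₀ hk0, ENNReal.rpow_one,
      ENNReal.ofReal_rpow_of_pos hc0, Real.rpow_natCast,
      ← ENNReal.ofReal_coe_nnreal, coe_nnnorm] at h3
    exact (ENNReal.ofReal_le_ofReal_iff (by positivity)).mp h3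
  -- row sums
  set s : ℕ → Fin n → ℝ := fun k i => ∑ j, (M ^ k) i j with hsdef
  have hs0 : ∀ k i, 0 ≤ s k i := fun k i =>
    Finset.sum_nonneg fun j _ => pow_entry_nonneg M hM k i j
  have hmap : ∀ k : ℕ, A ^ k = (M ^ k).map (algebraMap ℝ ℂ) := by
    intro k
    rw [hA, ← RingHom.mapMatrix_apply, ← RingHom.mapMatrix_apply, map_pow]
  have hsnorm : ∀ k i, s k i ≤ ‖A ^ k‖ := by
    intro k i
    have : s k i = ∑ j, ‖(A ^ k) i j‖ := by
      rw [hsdef]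
      refine Finset.sum_congr rfl fun j _ => ?_
      rw [hmap k, Matrix.map_apply]
      simp [Real.norm_eq_abs, abs_of_nonneg (pow_entry_nonneg M hM k i j)]
    rw [this]
    exact rowsum_le_norm _ i
  -- summability
  have hsum : ∀ i, Summable (fun k => (1 / lam) ^ (k + 1) * s k i) := by
    intro i
    rw [← summable_nat_add_iff K]
    have hgeo : Summable (fun k : ℕ => ((1 / lam) ^ (K + 1) * c ^ K) * (c / lam) ^ k) := by
      apply Summable.mul_left
      exact summable_geometric_of_lt_one (by positivity) ((div_lt_one hlam0).mpr hclam)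
    refine Summable.of_nonneg_of_le (fun k => ?_) (fun k => ?_) hgeo
    · exact mul_nonneg (by positivity) (hs0 _ _)
    · have h1 : s (k + K) i ≤ c ^ (k + K) :=
        le_trans (hsnorm (k + K) i) (hpow (k + K) (by omega))
      have h2 : (1 / lam) ^ (k + K + 1) * s (k + K) i ≤ (1 / lam) ^ (k + K + 1) * c ^ (k + K) :=
        mul_le_mul_of_nonneg_left h1 (by positivity)
      refine le_trans h2 (le_of_eq ?_)
      have hcl : c / lam = c * (1 / lam) := by ring
      rw [hcl, mul_pow, pow_add, pow_add, pow_add]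
      ring
  set v : Fin n → ℝ := fun i => ∑' k, (1 / lam) ^ (k + 1) * s k i with hvdef
  have hs0' : ∀ i, s 0 i = 1 := by
    intro i
    rw [hsdef]
    simp [Matrix.one_apply]
  have hvpos : ∀ i, 0 < v i := by
    intro i
    have h1 : (1 / lam) ^ (0 + 1) * s 0 i ≤ v i :=
      Summable.le_tsum (hsum i) 0 fun j _ => mul_nonneg (by positivity) (hs0 _ _)
    rw [hs0' i] at h1
    have : (0:ℝ) < (1 / lam) ^ (0 + 1) * 1 := by positivity
    linarith
  refine ⟨lam, v, hlam0, hlam1, hvpos, fun i => ?_⟩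
  have hrec : ∀ k, s (k + 1) i = ∑ j, M i j * s k j := by
    intro k
    rw [hsdef]
    simp only [pow_succ']
    simp_rw [Matrix.mul_apply, Finset.mul_sum]
    exact Finset.sum_comm
  calc ∑ j, M i j * v j
      = ∑ j, ∑' k, M i j * ((1 / lam) ^ (k + 1) * s k j) := by
        refine Finset.sum_congr rfl fun j _ => ?_
        rw [hvdef, tsum_mul_left]
    _ = ∑' k, ∑ j, M i j * ((1 / lam) ^ (k + 1) * s k j) :=
        (Summable.tsum_finsetSum fun j _ => (hsum j).mul_left _).symm
    _ = ∑' k, (1 / lam) ^ (k + 1) * s (k + 1) i := by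
        refine tsum_congr fun k => ?_
        rw [hrec k, Finset.mul_sum]
        refine Finset.sum_congr rfl fun j _ => by ring
    _ = lam * ∑' k, (1 / lam) ^ (k + 1 + 1) * s (k + 1) i := by
        rw [← tsum_mul_left]
        refine tsum_congr fun k => ?_
        have h1 : lam * (1 / lam) ^ (k + 1 + 1) = (1 / lam) ^ (k + 1) := by
          rw [pow_succ' (1 / lam) (k + 1)]
          field_simp
        rw [← mul_assoc, h1]
    _ ≤ lam * v i := by
        refine mul_le_mul_of_nonneg_left ?_ hlam0.le
        have hshift := Summable.tsum_eq_zero_add (hsum i)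
        have h0 : 0 ≤ (1 / lam) ^ (0 + 1) * s 0 i := mul_nonneg (by positivity) (hs0 _ _)
        show (∑' k, (1 / lam) ^ (k + 1 + 1) * s (k + 1) i) ≤ ∑' k, (1 / lam) ^ (k + 1) * s k i
        rw [hshift]
        exact le_add_of_nonneg_left h0

lemma specRad_transpose (M : Matrix (Fin n) (Fin n) ℝ) : specRad Mᵀ = specRad M := by
  have hσ : spectrum ℂ (Mᵀ.map (algebraMap ℝ ℂ)) = spectrum ℂ (M.map (algebraMap ℝ ℂ)) := by
    set A := M.map (algebraMap ℝ ℂ) with hA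
    have hmap : Mᵀ.map (algebraMap ℝ ℂ) = Aᵀ := Matrix.transpose_map
    rw [hmap]
    ext μ
    have hdiag : ∀ B : Matrix (Fin n) (Fin n) ℂ,
        algebraMap ℂ (Matrix (Fin n) (Fin n) ℂ) μ - Bᵀ = (algebraMap ℂ _ μ - B)ᵀ := by
      intro B
      rw [Matrix.transpose_sub]
      congr 1
      rw [Algebra.algebraMap_eq_smul_one, Matrix.transpose_smul, Matrix.transpose_one]
    simp only [spectrum.mem_iff]
    rw [hdiag A, Matrix.isUnit_iff_isUnit_det, Matrix.det_transpose,
      ← Matrix.isUnit_iff_isUnit_det]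
  unfold specRad
  rw [hσ]

end Aux

theorem stmt1 {n : ℕ} (M : Matrix (Fin n) (Fin n) ℝ)
    (hM : ∀ i j, 0 ≤ M i j) (hρ : specRad M < 1) :
    ∃ P : Matrix (Fin n) (Fin n) ℝ,
      P.IsDiag ∧ (∀ i, 0 < P i i) ∧ (-(Mᵀ * P * M - P)).PosDef := by
  classical
  obtain ⟨lam, v, hlam0, hlam1, hv, hMv⟩ := exists_contraction_vector M hM hρ
  obtain ⟨mu, u, hmu0, hmu1, hu, hMu⟩ :=
    exists_contraction_vector Mᵀ (fun i j => hM j i) (by rwa [specRad_transpose])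
  set d : Fin n → ℝ := fun i => u i / v i with hddef
  have hd : ∀ i, 0 < d i := fun i => div_pos (hu i) (hv i)
  set P : Matrix (Fin n) (Fin n) ℝ := Matrix.diagonal d with hPdef
  refine ⟨P, Matrix.isDiag_diagonal d, ?_, Matrix.posDef_iff_dotProduct_mulVec.mpr ⟨?_, ?_⟩⟩
  · intro i
    rw [hPdef, Matrix.diagonal_apply_eq]
    exact hd i
  · -- Hermitian
    have h1 : (Mᵀ * P * M)ᵀ = Mᵀ * P * M := by
      rw [Matrix.transpose_mul, Matrix.transpose_mul, Matrix.transpose_transpose, hPdef,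
        Matrix.diagonal_transpose, Matrix.mul_assoc]
    have h2 : Pᵀ = P := by rw [hPdef, Matrix.diagonal_transpose]
    show (-(Mᵀ * P * M - P))ᴴ = -(Mᵀ * P * M - P)
    rw [Matrix.conjTranspose_eq_transpose_of_trivial, Matrix.transpose_neg,
      Matrix.transpose_sub, h1, h2]
  · intro x hx
    set y : Fin n → ℝ := M *ᵥ x with hydef
    have hy : ∀ i, y i = ∑ j, M i j * x j := fun i => rfl
    have hform : star x ⬝ᵥ ((-(Mᵀ * P * M - P)) *ᵥ x)
        = ∑ i, d i * x i ^ 2 - ∑ i, d i * y i ^ 2 := by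
      rw [star_trivial, neg_sub, Matrix.sub_mulVec, dotProduct_sub]
      congr 1
      · rw [hPdef]
        simp only [dotProduct, Matrix.mulVec_diagonal]
        exact Finset.sum_congr rfl fun i _ => by ring
      · rw [← Matrix.mulVec_mulVec, ← Matrix.mulVec_mulVec, Matrix.dotProduct_mulVec,
          Matrix.vecMul_transpose, ← hydef, hPdef]
        simp only [dotProduct, Matrix.mulVec_diagonal]
        exact Finset.sum_congr rfl fun i _ => by ring
    rw [hform]
    have hxpos : 0 < ∑ i, d i * x i ^ 2 := by
      obtain ⟨i, hi⟩ := Function.ne_iff.mp hx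
      refine Finset.sum_pos' (fun j _ => mul_nonneg (hd j).le (sq_nonneg _))
        ⟨i, Finset.mem_univ i, mul_pos (hd i) (pow_two_pos_of_ne_zero (by simpa using hi))⟩
    have hkey : ∑ i, d i * y i ^ 2 ≤ lam * mu * ∑ i, d i * x i ^ 2 := by
      have step1 : ∀ i, d i * y i ^ 2
          ≤ d i * ((lam * v i) * ∑ j, M i j * (x j ^ 2 / v j)) := by
        intro i
        refine mul_le_mul_of_nonneg_left ?_ (hd i).le
        have hcs : (∑ j, M i j * x j) ^ 2
            ≤ (∑ j, M i j * v j) * ∑ j, M i j * (x j ^ 2 / v j) := by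
          refine Finset.sum_sq_le_sum_mul_sum_of_sq_eq_mul Finset.univ
            (fun j _ => mul_nonneg (hM i j) (hv j).le)
            (fun j _ => mul_nonneg (hM i j) (div_nonneg (sq_nonneg _) (hv j).le)) (fun j _ => ?_)
          have hvj : v j ≠ 0 := (hv j).ne'
          field_simp
        have hgsum : 0 ≤ ∑ j, M i j * (x j ^ 2 / v j) :=
          Finset.sum_nonneg fun j _ => mul_nonneg (hM i j) (div_nonneg (sq_nonneg _) (hv j).le)
        calc y i ^ 2 = (∑ j, M i j * x j) ^ 2 := by rw [hy]
          _ ≤ (∑ j, M i j * v j) * ∑ j, M i j * (x j ^ 2 / v j) := hcs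
          _ ≤ (lam * v i) * ∑ j, M i j * (x j ^ 2 / v j) :=
              mul_le_mul_of_nonneg_right (hMv i) hgsum
      calc ∑ i, d i * y i ^ 2
          ≤ ∑ i, d i * ((lam * v i) * ∑ j, M i j * (x j ^ 2 / v j)) :=
            Finset.sum_le_sum fun i _ => step1 i
        _ = lam * ∑ j, (x j ^ 2 / v j) * (∑ i, M i j * u i) := by
            have e1 : ∀ i, d i * ((lam * v i) * ∑ j, M i j * (x j ^ 2 / v j))
                = ∑ j, lam * (M i j * u i * (x j ^ 2 / v j)) := by
              intro i
              have hvne : v i ≠ 0 := (hv i).ne'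
              have hdv : d i * (lam * v i) = lam * u i := by
                rw [hddef]
                field_simp
              rw [← mul_assoc, hdv, Finset.mul_sum]
              exact Finset.sum_congr rfl fun j _ => by ring
            rw [Finset.sum_congr rfl fun i _ => e1 i, Finset.sum_comm, Finset.mul_sum]
            refine Finset.sum_congr rfl fun j _ => ?_
            rw [Finset.mul_sum, Finset.mul_sum]
            exact Finset.sum_congr rfl fun i _ => by ring
        _ ≤ lam * ∑ j, (x j ^ 2 / v j) * (mu * u j) := by
            refine mul_le_mul_of_nonneg_left (Finset.sum_le_sum fun j _ => ?_) hlam0.le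
            refine mul_le_mul_of_nonneg_left ?_ (div_nonneg (sq_nonneg _) (hv j).le)
            have := hMu j
            simpa [Matrix.transpose_apply] using this
        _ = lam * mu * ∑ j, d j * x j ^ 2 := by
            rw [Finset.mul_sum, Finset.mul_sum]
            refine Finset.sum_congr rfl fun j _ => ?_
            rw [hddef]
            field_simp
    have hlm : lam * mu < 1 := by nlinarith
    nlinarith
end

section
/- If M is an irreducible entrywise nonnegative square real matrix with spectral radius ρ(M) = 1, then there exists a diagonal matrix P with strictly positive diagonal entries such that MᵀPM - P is negative semidefinite. -/
open Matrix Filter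
open Topology

section PFaux

variable {n : ℕ}

private lemma mulVec_nonneg {M : Matrix (Fin n) (Fin n) ℝ} (hM : ∀ i j, 0 ≤ M i j)
    {x : Fin n → ℝ} (hx : ∀ i, 0 ≤ x i) : ∀ i, 0 ≤ (M *ᵥ x) i := by
  intro i
  simp only [mulVec, dotProduct]
  exact Finset.sum_nonneg fun j _ => mul_nonneg (hM i j) (hx j)

/-- Support growth: applying `(1 + M)` to a nonnegative nonzero vector `k` times
makes the support have at least `min n (card supp + k)` elements; we state the
version giving full positivity. -/
private lemma pf_card (M : Matrix (Fin n) (Fin n) ℝ) (hM : ∀ i j, 0 ≤ M i j)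
    (hirr : MatIrreducible M) :
    ∀ (k : ℕ) (x : Fin n → ℝ), (∀ i, 0 ≤ x i) → (∃ i, 0 < x i) →
      n ≤ (Finset.univ.filter (fun i => 0 < x i)).card + k →
      ∀ i, 0 < (((1 + M) ^ k) *ᵥ x) i := by
  intro k
  induction k with
  | zero =>
    intro x hx hx0 hcard i
    have hle := Finset.card_filter_le (Finset.univ : Finset (Fin n)) (fun i => 0 < x i)
    have hcu : (Finset.univ : Finset (Fin n)).card = n := by simp
    have hcu2 : Fintype.card (Fin n) = n := Fintype.card_fin n
    have huniv : (Finset.univ.filter (fun i => 0 < x i)) = Finset.univ :=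
      Finset.eq_univ_of_card _ (by omega)
    have hmm : i ∈ Finset.univ.filter (fun i => 0 < x i) := by
      rw [huniv]; exact Finset.mem_univ i
    have hxi : 0 < x i := (Finset.mem_filter.mp hmm).2
    simpa [pow_zero, one_mulVec] using hxi
  | succ k ih =>
    intro x hx hx0 hcard i
    set y : Fin n → ℝ := x + M *ᵥ x with hy
    have hyx : ∀ j, x j ≤ y j := fun j => le_add_of_nonneg_right (mulVec_nonneg hM hx j)
    have hynn : ∀ j, 0 ≤ y j := fun j => le_trans (hx j) (hyx j)
    have hsub : (Finset.univ.filter (fun i => 0 < x i)) ⊆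
        (Finset.univ.filter (fun i => 0 < y i)) := by
      intro j hj
      simp only [Finset.mem_filter, Finset.mem_univ, true_and] at hj ⊢
      exact lt_of_lt_of_le hj (hyx j)
    have hy0 : ∃ j, 0 < y j := by
      obtain ⟨j, hj⟩ := hx0
      exact ⟨j, lt_of_lt_of_le hj (hyx j)⟩
    have hcard' : n ≤ (Finset.univ.filter (fun i => 0 < y i)).card + k := by
      by_cases hu : (Finset.univ.filter (fun i => 0 < x i)) = Finset.univ
      · have h1 : (Finset.univ.filter (fun i => 0 < y i)).card ≥
            (Finset.univ.filter (fun i => 0 < x i)).card := Finset.card_le_card hsub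
        have h2 : (Finset.univ.filter (fun i => 0 < x i)).card = n := by
          rw [hu]; simp
        omega
      · -- strict growth via irreducibility
        have hex : ∃ a, a ∉ Finset.univ.filter (fun i => 0 < x i) := by
          by_contra h
          push_neg at h
          exact hu (Finset.eq_univ_iff_forall.mpr h)
        obtain ⟨a₀, ha₀⟩ := hex
        obtain ⟨a, ha, b, hb, hab⟩ := hirr {i | ¬ 0 < x i}
          (⟨a₀, by simpa using ha₀⟩)
          (by
            obtain ⟨j, hj⟩ := hx0
            exact ⟨j, by simp [hj]⟩)
        have hb' : 0 < x b := by simpa using hb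
        have hMa : 0 < (M *ᵥ x) a := by
          simp only [mulVec, dotProduct]
          apply Finset.sum_pos' (fun j _ => mul_nonneg (hM a j) (hx j))
          exact ⟨b, Finset.mem_univ b, mul_pos (lt_of_le_of_ne (hM a b) (Ne.symm hab)) hb'⟩
        have hya : 0 < y a := by
          have hxa : 0 ≤ x a := hx a
          simp only [hy, Pi.add_apply]
          linarith
        have hss : (Finset.univ.filter (fun i => 0 < x i)) ⊂
            (Finset.univ.filter (fun i => 0 < y i)) := by
          refine Finset.ssubset_iff_of_subset hsub |>.mpr ⟨a, ?_, ?_⟩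
          · simp [hya]
          · simpa using ha
        have := Finset.card_lt_card hss
        omega
    have hrw : ((1 + M) ^ (k + 1)) *ᵥ x = ((1 + M) ^ k) *ᵥ y := by
      rw [pow_succ, ← mulVec_mulVec, add_mulVec, one_mulVec]
    rw [hrw]
    exact ih y hynn hy0 hcard' i

private lemma pf_B_pos (hn : 0 < n) (M : Matrix (Fin n) (Fin n) ℝ) (hM : ∀ i j, 0 ≤ M i j)
    (hirr : MatIrreducible M) (x : Fin n → ℝ) (hx : ∀ i, 0 ≤ x i) (hx0 : ∃ i, 0 < x i) :
    ∀ i, 0 < (((1 + M) ^ (n - 1)) *ᵥ x) i := by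
  apply pf_card M hM hirr (n - 1) x hx hx0
  obtain ⟨j, hj⟩ := hx0
  have : 1 ≤ (Finset.univ.filter (fun i => 0 < x i)).card := by
    refine Finset.card_pos.mpr ⟨j, ?_⟩
    simp [hj]
  omega

/-- Perron–Frobenius for irreducible nonnegative matrices: existence of a strictly
positive eigenvector with nonnegative eigenvalue. -/
private lemma pf_exists (hn : 0 < n) (M : Matrix (Fin n) (Fin n) ℝ) (hM : ∀ i j, 0 ≤ M i j)
    (hirr : MatIrreducible M) :
    ∃ (r : ℝ) (v : Fin n → ℝ), 0 ≤ r ∧ (∀ i, 0 < v i) ∧ M *ᵥ v = r • v := by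
  haveI : Nonempty (Fin n) := ⟨⟨0, hn⟩⟩
  set Δ : Set (Fin n → ℝ) := {x | (∀ i, 0 ≤ x i) ∧ ∑ i, x i = 1} with hΔ
  set R : Set ℝ := {r | 0 ≤ r ∧ ∃ x ∈ Δ, ∀ i, r * x i ≤ (M *ᵥ x) i} with hR
  have hnR : (n : ℝ) ≠ 0 := Nat.cast_ne_zero.mpr hn.ne'
  have hR0 : (0 : ℝ) ∈ R := by
    refine ⟨le_refl 0, fun _ => (n : ℝ)⁻¹, ⟨fun i => by positivity, ?_⟩, fun i => ?_⟩
    · simp [Finset.sum_const, Finset.card_univ]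
      field_simp
    · have := mulVec_nonneg hM (x := fun _ => (n : ℝ)⁻¹) (fun i => by positivity) i
      simpa using this
  have hRbdd : BddAbove R := by
    refine ⟨∑ i, ∑ j, M i j, ?_⟩
    rintro r ⟨hr0, x, ⟨hxnn, hxsum⟩, hineq⟩
    obtain ⟨i₀, _, hmax⟩ := Finset.exists_max_image Finset.univ x ⟨Classical.arbitrary _, Finset.mem_univ _⟩
    have hi₀pos : 0 < x i₀ := by
      by_contra h
      push_neg at h
      have : ∑ i, x i ≤ 0 := Finset.sum_nonpos fun i _ => le_trans (hmax i (Finset.mem_univ i)) h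
      rw [hxsum] at this; linarith
    have h1 : r * x i₀ ≤ (M *ᵥ x) i₀ := hineq i₀
    have h2 : (M *ᵥ x) i₀ ≤ (∑ j, M i₀ j) * x i₀ := by
      simp only [mulVec, dotProduct]
      rw [Finset.sum_mul]
      exact Finset.sum_le_sum fun j _ =>
        mul_le_mul_of_nonneg_left (hmax j (Finset.mem_univ j)) (hM i₀ j)
    have h3 : (∑ j, M i₀ j) ≤ ∑ i, ∑ j, M i j :=
      Finset.single_le_sum (fun i _ => Finset.sum_nonneg fun j _ => hM i j) (Finset.mem_univ i₀)
    have := le_trans h1 (le_trans h2 (mul_le_mul_of_nonneg_right h3 hi₀pos.le))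
    exact le_of_mul_le_mul_right this hi₀pos
  set r : ℝ := sSup R with hrdef
  have hr0 : 0 ≤ r := le_csSup hRbdd hR0
  -- choose approximate maximizers
  have hchoice : ∀ k : ℕ, ∃ x ∈ Δ, ∀ i, (r - 1 / (k + 1)) * x i ≤ (M *ᵥ x) i := by
    intro k
    have hlt : r - 1 / (k + 1) < r := by
      have : (0 : ℝ) < 1 / (k + 1) := by positivity
      linarith
    obtain ⟨s, hsR, hslt⟩ := exists_lt_of_lt_csSup ⟨0, hR0⟩ hlt
    obtain ⟨hs0, x, hxΔ, hineq⟩ := hsR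
    exact ⟨x, hxΔ, fun i =>
      le_trans (mul_le_mul_of_nonneg_right hslt.le (hxΔ.1 i)) (hineq i)⟩
  choose xs hxsΔ hxs using hchoice
  -- compactness of the simplex
  have hΔclosed : IsClosed Δ := by
    have h1 : IsClosed {x : Fin n → ℝ | ∀ i, 0 ≤ x i} := by
      have : {x : Fin n → ℝ | ∀ i, 0 ≤ x i} = ⋂ i, {x : Fin n → ℝ | 0 ≤ x i} := by
        ext x; simp [Set.mem_iInter]
      rw [this]
      exact isClosed_iInter fun i => isClosed_le continuous_const (continuous_apply i)
    have h2 : IsClosed {x : Fin n → ℝ | ∑ i, x i = 1} :=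
      isClosed_eq (by continuity) continuous_const
    have : Δ = {x : Fin n → ℝ | ∀ i, 0 ≤ x i} ∩ {x : Fin n → ℝ | ∑ i, x i = 1} := rfl
    rw [this]
    exact h1.inter h2
  have hΔcompact : IsCompact Δ := by
    refine (isCompact_closedBall (0 : Fin n → ℝ) 1).of_isClosed_subset hΔclosed ?_
    intro x ⟨hxnn, hxsum⟩
    rw [Metric.mem_closedBall, dist_zero_right]
    refine (pi_norm_le_iff_of_nonneg zero_le_one).mpr fun i => ?_
    rw [Real.norm_eq_abs, abs_of_nonneg (hxnn i)]
    calc x i ≤ ∑ j, x j := Finset.single_le_sum (fun j _ => hxnn j) (Finset.mem_univ i)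
      _ = 1 := hxsum
  obtain ⟨v, hvΔ, φ, hφmono, hφtend⟩ := hΔcompact.tendsto_subseq hxsΔ
  -- pass to the limit
  have hvineq : ∀ i, r * v i ≤ (M *ᵥ v) i := by
    intro i
    have hcoord : ∀ j, Tendsto (fun k => xs (φ k) j) atTop (𝓝 (v j)) := by
      intro j
      exact tendsto_pi_nhds.mp hφtend j
    have h1 : Tendsto (fun k => (r - 1 / ((φ k : ℝ) + 1)) * xs (φ k) i) atTop (𝓝 (r * v i)) := by
      have h0 : Tendsto (fun k => 1 / ((φ k : ℝ) + 1)) atTop (𝓝 (0:ℝ)) := by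
        have := (tendsto_one_div_add_atTop_nhds_zero_nat (𝕜 := ℝ)).comp hφmono.tendsto_atTop
        simpa [Function.comp_def] using this
      have := ((tendsto_const_nhds : Tendsto (fun _ : ℕ => r) atTop (𝓝 r)).sub h0).mul (hcoord i)
      simpa using this
    have h2 : Tendsto (fun k => (M *ᵥ xs (φ k)) i) atTop (𝓝 ((M *ᵥ v) i)) := by
      simp only [mulVec, dotProduct]
      exact tendsto_finset_sum _ fun j _ => tendsto_const_nhds.mul (hcoord j)
    have h3 : ∀ k, (r - 1 / ((φ k : ℝ) + 1)) * xs (φ k) i ≤ (M *ᵥ xs (φ k)) i :=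
      fun k => hxs (φ k) i
    exact le_of_tendsto_of_tendsto' h1 h2 h3
  have hvnn : ∀ i, 0 ≤ v i := hvΔ.1
  have hv0 : ∃ i, 0 < v i := by
    by_contra h
    push_neg at h
    have : ∑ i, v i ≤ 0 := Finset.sum_nonpos fun i _ => h i
    rw [hvΔ.2] at this; linarith
  -- the inequality is in fact equality
  set z : Fin n → ℝ := M *ᵥ v - r • v with hzdef
  have hznn : ∀ i, 0 ≤ z i := fun i => by
    have := hvineq i
    simp only [hzdef, Pi.sub_apply, Pi.smul_apply, smul_eq_mul]
    linarith
  have hMvz : M *ᵥ v = r • v + z := by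
    simp [hzdef]
  have hzzero : z = 0 := by
    by_contra hz0
    have hz0' : ∃ i, 0 < z i := by
      by_contra h
      push_neg at h
      exact hz0 (funext fun i => le_antisymm (h i) (hznn i))
    set B : Matrix (Fin n) (Fin n) ℝ := (1 + M) ^ (n - 1) with hB
    have hyB : ∀ i, 0 < (B *ᵥ v) i := pf_B_pos hn M hM hirr v hvnn hv0
    have hwB : ∀ i, 0 < (B *ᵥ z) i := pf_B_pos hn M hM hirr z hznn hz0'
    set y : Fin n → ℝ := B *ᵥ v with hy
    set w : Fin n → ℝ := B *ᵥ z with hw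
    have hcomm : M * B = B * M := by
      have h1 : Commute M (1 + M) := (Commute.one_right M).add_right (Commute.refl M)
      exact (h1.pow_right (n - 1)).eq
    have hMy : M *ᵥ y = r • y + w := by
      rw [hy, mulVec_mulVec, hcomm, ← mulVec_mulVec, hMvz]
      rw [mulVec_add, mulVec_smul]
    set ε : ℝ := Finset.univ.inf' Finset.univ_nonempty (fun i => w i / y i) with hε
    have hεpos : 0 < ε := by
      rw [hε, Finset.lt_inf'_iff]
      exact fun i _ => div_pos (hwB i) (hyB i)
    have hkey : ∀ i, (r + ε) * y i ≤ (M *ᵥ y) i := by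
      intro i
      have h1 : ε ≤ w i / y i := Finset.inf'_le _ (Finset.mem_univ i)
      have h2 : ε * y i ≤ w i := (le_div_iff₀ (hyB i)).mp h1
      have h3 : (M *ᵥ y) i = r * y i + w i := by
        rw [hMy]; simp
      rw [h3]; nlinarith [hyB i]
    set c : ℝ := ∑ i, y i with hc
    have hcpos : 0 < c := Finset.sum_pos (fun i _ => hyB i) Finset.univ_nonempty
    have hmem : r + ε ∈ R := by
      refine ⟨by linarith, c⁻¹ • y, ⟨fun i => ?_, ?_⟩, fun i => ?_⟩
      · have h1 := hyB i
        have h2 : (0:ℝ) < c⁻¹ := by positivity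
        simp only [Pi.smul_apply, smul_eq_mul]
        positivity
      · simp only [Pi.smul_apply, smul_eq_mul, ← Finset.mul_sum, ← hc]
        field_simp
      · rw [mulVec_smul]
        simp only [Pi.smul_apply, smul_eq_mul]
        have := hkey i
        have hci : (0:ℝ) ≤ c⁻¹ := by positivity
        calc (r + ε) * (c⁻¹ * y i) = c⁻¹ * ((r + ε) * y i) := by ring
          _ ≤ c⁻¹ * (M *ᵥ y) i := mul_le_mul_of_nonneg_left this hci
    have : r + ε ≤ r := le_csSup hRbdd hmem
    linarith
  rw [hzzero, add_zero] at hMvz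
  -- positivity of v
  have hiter : ∀ k : ℕ, ((1 + M) ^ k) *ᵥ v = ((1 + r) ^ k) • v := by
    intro k
    induction k with
    | zero => simp [one_mulVec]
    | succ k ih =>
      rw [pow_succ, ← mulVec_mulVec, add_mulVec, one_mulVec, hMvz]
      have : v + r • v = (1 + r) • v := by
        ext i; simp; ring
      rw [this, mulVec_smul, ih, smul_smul]
      ring_nf
  have hBv := pf_B_pos hn M hM hirr v hvnn hv0
  have hvpos : ∀ i, 0 < v i := by
    intro i
    have h1 := hBv i
    rw [hiter (n - 1)] at h1
    simp only [Pi.smul_apply, smul_eq_mul] at h1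
    have h2 : (0:ℝ) < (1 + r) ^ (n - 1) := pow_pos (by linarith) _
    nlinarith
  exact ⟨r, v, hr0, hvpos, hMvz⟩

/-- Any nonnegative real `s` such that `s • 1 - M` is singular is at most `specRad M`. -/
private lemma pf_spec_bound (M : Matrix (Fin n) (Fin n) ℝ) {s : ℝ} (hs : 0 ≤ s)
    (hdet : (s • (1 : Matrix (Fin n) (Fin n) ℝ) - M).det = 0) : s ≤ specRad M := by
  set A : Matrix (Fin n) (Fin n) ℂ := M.map (algebraMap ℝ ℂ) with hA
  have hmem : (s : ℂ) ∈ spectrum ℂ A := by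
    rw [spectrum.mem_iff]
    rw [Matrix.isUnit_iff_isUnit_det]
    have heq : (algebraMap ℂ (Matrix (Fin n) (Fin n) ℂ)) (s:ℂ) - A =
        ((algebraMap ℝ ℂ : ℝ →+* ℂ).mapMatrix : Matrix (Fin n) (Fin n) ℝ →+* Matrix (Fin n) (Fin n) ℂ)
          (s • (1 : Matrix (Fin n) (Fin n) ℝ) - M) := by
      ext i j
      simp only [Matrix.sub_apply, Matrix.algebraMap_matrix_apply, RingHom.mapMatrix_apply,
        Matrix.map_apply, Matrix.smul_apply, Matrix.one_apply, smul_eq_mul]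
      by_cases h : i = j <;> simp [h, hA, Matrix.map_apply]
    rw [heq, ← RingHom.map_det]
    rw [hdet]
    simp
  have hsetRw : {r : ℝ | ∃ μ ∈ spectrum ℂ A, r = ‖μ‖} =
      (fun μ : ℂ => ‖μ‖) '' spectrum ℂ A := by
    ext t; constructor
    · rintro ⟨μ, hμ, rfl⟩; exact ⟨μ, hμ, rfl⟩
    · rintro ⟨μ, hμ, rfl⟩; exact ⟨μ, hμ, rfl⟩
  have hbdd : BddAbove {r : ℝ | ∃ μ ∈ spectrum ℂ A, r = ‖μ‖} := by
    rw [hsetRw]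
    exact ((Matrix.finite_spectrum A).image _).bddAbove
  have hsmem : s ∈ {r : ℝ | ∃ μ ∈ spectrum ℂ A, r = ‖μ‖} :=
    ⟨(s : ℂ), hmem, by rw [Complex.norm_real, Real.norm_eq_abs, abs_of_nonneg hs]⟩
  exact le_csSup hbdd hsmem

end PFaux

theorem stmt2 {n : ℕ} (M : Matrix (Fin n) (Fin n) ℝ)
    (hM : ∀ i j, 0 ≤ M i j) (hirr : MatIrreducible M) (hρ : specRad M = 1) :
    ∃ P : Matrix (Fin n) (Fin n) ℝ,
      P.IsDiag ∧ (∀ i, 0 < P i i) ∧ (-(Mᵀ * P * M - P)).PosSemidef := by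
  rcases Nat.eq_zero_or_pos n with h0 | hn
  · subst h0
    refine ⟨1, Matrix.isDiag_one, fun i => i.elim0, ?_, fun x => ?_⟩
    · exact Subsingleton.elim _ _
    · rw [Finsupp.sum, Finset.eq_empty_of_isEmpty x.support]; simp
  · -- transpose is irreducible
    have hirrT : MatIrreducible Mᵀ := by
      intro S hS hSc
      obtain ⟨i, hi, j, hj, hij⟩ := hirr Sᶜ hSc (by rwa [compl_compl])
      rw [compl_compl] at hj
      exact ⟨j, hj, i, hi, by simpa [Matrix.transpose_apply] using hij⟩
    obtain ⟨r, v, hr0, hv, hMv⟩ := pf_exists hn M hM hirr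
    obtain ⟨s, u, hs0, hu, hMu⟩ := pf_exists hn Mᵀ (fun i j => hM j i) hirrT
    have hvne : v ≠ 0 := by
      intro h
      have := hv ⟨0, hn⟩
      rw [h] at this; simp at this
    have hune : u ≠ 0 := by
      intro h
      have := hu ⟨0, hn⟩
      rw [h] at this; simp at this
    -- r ≤ 1
    have hdetr : (r • (1 : Matrix (Fin n) (Fin n) ℝ) - M).det = 0 := by
      rw [← Matrix.exists_mulVec_eq_zero_iff]
      refine ⟨v, hvne, ?_⟩
      rw [sub_mulVec, smul_mulVec, one_mulVec, hMv, sub_self]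
    have hdets : (s • (1 : Matrix (Fin n) (Fin n) ℝ) - M).det = 0 := by
      have h1 : (s • (1 : Matrix (Fin n) (Fin n) ℝ) - Mᵀ).det = 0 := by
        rw [← Matrix.exists_mulVec_eq_zero_iff]
        refine ⟨u, hune, ?_⟩
        rw [sub_mulVec, smul_mulVec, one_mulVec, hMu, sub_self]
      have h2 : (s • (1 : Matrix (Fin n) (Fin n) ℝ) - Mᵀ) =
          (s • (1 : Matrix (Fin n) (Fin n) ℝ) - M)ᵀ := by
        rw [Matrix.transpose_sub, Matrix.transpose_smul, Matrix.transpose_one]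
      rw [h2, Matrix.det_transpose] at h1
      exact h1
    have hr1 : r ≤ 1 := hρ ▸ pf_spec_bound M hr0 hdetr
    have hs1 : s ≤ 1 := hρ ▸ pf_spec_bound M hs0 hdets
    -- subinvariance
    have hMvle : ∀ i, (M *ᵥ v) i ≤ v i := by
      intro i
      rw [hMv]
      simp only [Pi.smul_apply, smul_eq_mul]
      nlinarith [hv i]
    have hMule : ∀ j, (Mᵀ *ᵥ u) j ≤ u j := by
      intro j
      rw [hMu]
      simp only [Pi.smul_apply, smul_eq_mul]
      nlinarith [hu j]
    set p : Fin n → ℝ := fun i => u i / v i with hp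
    have hppos : ∀ i, 0 < p i := fun i => div_pos (hu i) (hv i)
    refine ⟨Matrix.diagonal p, Matrix.isDiag_diagonal p, fun i => by
      simpa [Matrix.diagonal_apply_eq] using hppos i,
        posSemidef_iff_dotProduct_mulVec.mpr ⟨?_, ?_⟩⟩
    · -- Hermitian
      show (-(Mᵀ * Matrix.diagonal p * M - Matrix.diagonal p))ᴴ = _
      rw [Matrix.conjTranspose_eq_transpose_of_trivial]
      rw [Matrix.transpose_neg, Matrix.transpose_sub, Matrix.transpose_mul, Matrix.transpose_mul,
        Matrix.transpose_transpose, Matrix.diagonal_transpose, Matrix.mul_assoc]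
    · -- quadratic form
      intro x
      have hstar : star x = x := by
        funext i; simp
      rw [hstar]
      rw [neg_sub, sub_mulVec, dotProduct_sub]
      have hterm : x ⬝ᵥ ((Mᵀ * Matrix.diagonal p * M) *ᵥ x) =
          (M *ᵥ x) ⬝ᵥ (Matrix.diagonal p *ᵥ (M *ᵥ x)) := by
        rw [← mulVec_mulVec, ← mulVec_mulVec, dotProduct_mulVec, vecMul_transpose]
      rw [hterm]
      have hquad : ∀ w : Fin n → ℝ, w ⬝ᵥ (Matrix.diagonal p *ᵥ w) = ∑ i, p i * w i ^ 2 := by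
        intro w
        simp only [dotProduct, mulVec_diagonal]
        exact Finset.sum_congr rfl fun i _ => by ring
      rw [hquad, hquad, sub_nonneg]
      -- the key inequality
      have step1 : ∀ i, (M *ᵥ x) i ^ 2 ≤ v i * ∑ j, M i j * x j ^ 2 / v j := by
        intro i
        have hCS := Finset.sum_mul_sq_le_sq_mul_sq Finset.univ
          (fun j => Real.sqrt (M i j * v j)) (fun j => Real.sqrt (M i j / v j) * x j)
        have hfg : ∀ j, Real.sqrt (M i j * v j) * (Real.sqrt (M i j / v j) * x j)
            = M i j * x j := by
          intro j
          rw [← mul_assoc, ← Real.sqrt_mul (mul_nonneg (hM i j) (hv j).le)]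
          have h1 : M i j * v j * (M i j / v j) = M i j ^ 2 := by
            have hvj : v j ≠ 0 := (hv j).ne'
            field_simp
          rw [h1, Real.sqrt_sq (hM i j)]
        have hf2 : ∀ j, Real.sqrt (M i j * v j) ^ 2 = M i j * v j :=
          fun j => Real.sq_sqrt (mul_nonneg (hM i j) (hv j).le)
        have hg2 : ∀ j, (Real.sqrt (M i j / v j) * x j) ^ 2 = M i j * x j ^ 2 / v j := by
          intro j
          rw [mul_pow, Real.sq_sqrt (div_nonneg (hM i j) (hv j).le)]
          ring
        have hMx : (M *ᵥ x) i = ∑ j, M i j * x j := rfl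
        calc (M *ᵥ x) i ^ 2 = (∑ j, Real.sqrt (M i j * v j) * (Real.sqrt (M i j / v j) * x j)) ^ 2 := by
              rw [hMx]
              congr 1
              exact Finset.sum_congr rfl fun j _ => (hfg j).symm
          _ ≤ (∑ j, Real.sqrt (M i j * v j) ^ 2) * ∑ j, (Real.sqrt (M i j / v j) * x j) ^ 2 := hCS
          _ = (∑ j, M i j * v j) * ∑ j, M i j * x j ^ 2 / v j := by
              congr 1
              · exact Finset.sum_congr rfl fun j _ => hf2 j
              · exact Finset.sum_congr rfl fun j _ => hg2 j
          _ ≤ v i * ∑ j, M i j * x j ^ 2 / v j := by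
              apply mul_le_mul_of_nonneg_right
              · have : (M *ᵥ v) i = ∑ j, M i j * v j := rfl
                rw [← this]; exact hMvle i
              · exact Finset.sum_nonneg fun j _ =>
                  div_nonneg (mul_nonneg (hM i j) (sq_nonneg _)) (hv j).le
      calc ∑ i, p i * (M *ᵥ x) i ^ 2
          ≤ ∑ i, p i * (v i * ∑ j, M i j * x j ^ 2 / v j) := by
            exact Finset.sum_le_sum fun i _ =>
              mul_le_mul_of_nonneg_left (step1 i) (hppos i).le
        _ = ∑ i, u i * ∑ j, M i j * x j ^ 2 / v j := by
            refine Finset.sum_congr rfl fun i _ => ?_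
            have hvi : v i ≠ 0 := (hv i).ne'
            rw [hp]
            field_simp
        _ = ∑ j, x j ^ 2 / v j * ∑ i, M i j * u i := by
            have hcomm : ∀ (i j : Fin n), u i * (M i j * x j ^ 2 / v j)
                = x j ^ 2 / v j * (M i j * u i) := fun i j => by ring
            calc ∑ i, u i * ∑ j, M i j * x j ^ 2 / v j
                = ∑ i, ∑ j, u i * (M i j * x j ^ 2 / v j) :=
                  Finset.sum_congr rfl fun i _ => Finset.mul_sum _ _ _
              _ = ∑ j, ∑ i, x j ^ 2 / v j * (M i j * u i) := by
                  rw [Finset.sum_comm]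
                  exact Finset.sum_congr rfl fun j _ =>
                    Finset.sum_congr rfl fun i _ => hcomm i j
              _ = ∑ j, x j ^ 2 / v j * ∑ i, M i j * u i :=
                  Finset.sum_congr rfl fun j _ => (Finset.mul_sum _ _ _).symm
        _ ≤ ∑ j, x j ^ 2 / v j * u j := by
            refine Finset.sum_le_sum fun j _ => ?_
            apply mul_le_mul_of_nonneg_left _ (div_nonneg (sq_nonneg _) (hv j).le)
            have : (Mᵀ *ᵥ u) j = ∑ i, M i j * u i := by
              simp [mulVec, dotProduct, Matrix.transpose_apply]
            rw [← this]; exact hMule j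
        _ = ∑ j, p j * x j ^ 2 := by
            refine Finset.sum_congr rfl fun j _ => ?_
            rw [hp]
            ring
end

section
/- If ρ(M(k+p-1)⋯M(k)) < 1 for every starting index k ∈ {0,...,p-1}, then the block cyclic matrix M̃ built from M(0),...,M(p-1) has spectral radius ρ(M̃) < 1. -/
open Matrix Filter

lemma mem_spec_iff_vec {m : Type*} [Fintype m] [DecidableEq m] (A : Matrix m m ℂ) (μ : ℂ) :
    μ ∈ spectrum ℂ A ↔ ∃ v ≠ 0, A.mulVec v = μ • v := by
  rw [← AlgEquiv.spectrum_eq (Matrix.toLinAlgEquiv' (R := ℂ) (n := m)) A,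
    ← Module.End.hasEigenvalue_iff_mem_spectrum]
  constructor
  · intro h
    obtain ⟨v, hv⟩ := h.exists_hasEigenvector
    exact ⟨v, hv.2, by simpa [Matrix.toLinAlgEquiv'_apply] using hv.apply_eq_smul⟩
  · rintro ⟨v, hv0, hv⟩
    exact Module.End.hasEigenvalue_of_hasEigenvector
      ⟨Module.End.mem_eigenspace_iff.mpr (by simpa [Matrix.toLinAlgEquiv'_apply] using hv), hv0⟩

lemma spec_set_eq {m : Type*} [Fintype m] [DecidableEq m] (A : Matrix m m ℝ) :
    {r : ℝ | ∃ μ ∈ spectrum ℂ (A.map (algebraMap ℝ ℂ)), r = ‖μ‖}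
      = (‖·‖) '' spectrum ℂ (A.map (algebraMap ℝ ℂ)) := by
  ext r; simp [eq_comm, Set.mem_image]

lemma abs_le_specRad {m : Type*} [Fintype m] [DecidableEq m] {A : Matrix m m ℝ} {μ : ℂ}
    (h : μ ∈ spectrum ℂ (A.map (algebraMap ℝ ℂ))) : ‖μ‖ ≤ specRad A := by
  apply le_csSup
  · rw [spec_set_eq]
    exact ((Matrix.finite_spectrum _).image _).bddAbove
  · exact ⟨μ, h, rfl⟩

lemma mono_succ {n : ℕ} (t : ℕ) (M : ℕ → Matrix (Fin n) (Fin n) ℝ) (k : ℕ) :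
    mono (t + 1) M k = M (k + t) * mono t M k := by
  simp [mono, List.range_succ]

open Fin.NatCast

theorem stmt5 {n p : ℕ} (hp : 0 < p) (M : ℕ → Matrix (Fin n) (Fin n) ℝ)
    (hper : ∀ k, M (k + p) = M k)
    (Mt : Matrix (Fin p × Fin n) (Fin p × Fin n) ℝ)
    (hMt : Mt = Matrix.of fun x y =>
      if (x.1 : ℕ) = ((y.1 : ℕ) + 1) % p then M (y.1 : ℕ) x.2 y.2 else 0)
    (hρ : ∀ k < p, specRad (mono p M k) < 1) :
    specRad Mt < 1 := by
  haveI : NeZero p := ⟨hp.ne'⟩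
  have hMmod : ∀ k : ℕ, M (k % p) = M k :=
    Function.Periodic.map_mod_nat (fun k => hper k)
  -- every eigenvalue of Mt has modulus < 1
  have key : ∀ μ ∈ spectrum ℂ (Mt.map (algebraMap ℝ ℂ)), ‖μ‖ < 1 := by
    intro μ hμ
    obtain ⟨v, hv0, hv⟩ := (mem_spec_iff_vec _ μ).mp hμ
    set w : Fin p → Fin n → ℂ := fun j i => v (j, i) with hw
    -- the one-step relation
    have hstep : ∀ j : Fin p,
        ((M (j : ℕ)).map (algebraMap ℝ ℂ)).mulVec (w j) = μ • w (j + 1) := by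
      intro j
      funext x2
      have h1 := congrFun hv (j + 1, x2)
      have hcond : ∀ y1 : Fin p, ((((j + 1 : Fin p) : ℕ) = ((y1 : ℕ) + 1) % p)) ↔ y1 = j := by
        intro y1
        have e1 : ∀ z : Fin p, (((z : ℕ) + 1) % p) = ((z + 1 : Fin p) : ℕ) := by
          intro z
          have h2 : (((z : ℕ) + 1 : ℕ) : Fin p) = z + 1 := by
            push_cast [Fin.cast_val_eq_self]; rfl
          rw [← h2, Fin.val_natCast]
        rw [e1 y1, Fin.val_eq_val]
        constructor
        · intro h; exact (add_left_inj 1).mp h.symm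
        · intro h; rw [h]
      rw [Matrix.mulVec, dotProduct, Fintype.sum_prod_type] at h1
      simp only [hMt, Matrix.map_apply, Matrix.of_apply, apply_ite (algebraMap ℝ ℂ),
        map_zero, ite_mul, zero_mul, hcond] at h1
      rw [Finset.sum_comm] at h1
      simp only [Finset.sum_ite_eq', Finset.mem_univ, if_true] at h1
      simp only [Matrix.mulVec, dotProduct, Matrix.map_apply, Pi.smul_apply, smul_eq_mul, hw]
      simpa using h1
    -- iterate the one-step relation
    have hiter : ∀ (j : Fin p) (t : ℕ),
        ((mono t M (j : ℕ)).map (algebraMap ℝ ℂ)).mulVec (w j)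
          = μ ^ t • w (j + (t : Fin p)) := by
      intro j t
      induction t with
      | zero => simp [mono]
      | succ t ih =>
        have hM : M ((j : ℕ) + t) = M (((j + (t : Fin p) : Fin p)) : ℕ) := by
          rw [← hMmod ((j : ℕ) + t)]
          rw [Fin.val_add, Fin.val_natCast]
          rw [Nat.add_mod_mod]
        rw [mono_succ, Matrix.map_mul, ← Matrix.mulVec_mulVec, ih, Matrix.mulVec_smul,
          hM, hstep (j + (t : Fin p)), smul_smul, ← pow_succ]
        congr 1
        push_cast
        rw [add_assoc]
    -- pick a nonzero block
    obtain ⟨⟨j0, i0⟩, hvi⟩ := Function.ne_iff.mp hv0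
    have hwj0 : w j0 ≠ 0 := by
      intro h
      exact hvi (congrFun h i0)
    have hfinal := hiter j0 p
    rw [Fin.natCast_self, add_zero] at hfinal
    have hspec : μ ^ p ∈ spectrum ℂ ((mono p M (j0 : ℕ)).map (algebraMap ℝ ℂ)) :=
      (mem_spec_iff_vec _ _).mpr ⟨w j0, hwj0, hfinal⟩
    have habs : ‖μ‖ ^ p < 1 := by
      have := (abs_le_specRad hspec).trans_lt (hρ j0 j0.isLt)
      rwa [norm_pow] at this
    exact (pow_lt_one_iff_of_nonneg (norm_nonneg μ) hp.ne').mp habs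
  -- conclude
  unfold specRad
  rw [spec_set_eq]
  rcases (spectrum ℂ (Mt.map (algebraMap ℝ ℂ))).eq_empty_or_nonempty with he | hne
  · rw [he]; simp
  · have hfin : ((‖·‖) '' spectrum ℂ (Mt.map (algebraMap ℝ ℂ))).Finite :=
      (Matrix.finite_spectrum _).image _
    have hmem := (hne.image (‖·‖)).csSup_mem hfin
    obtain ⟨μ, hμ, heq⟩ := hmem
    rw [← heq]
    exact key μ hμ
end

section
/- For the time-invariant discrete-time SIS system x(k+1) = x(k) + h((I - X(k))B̄ - D)x(k) with x(0) ∈ [0,1]^n, if ρ(I - hD + hB̄) < 1 then the disease-free equilibrium x = 0 is globally exponentially stable. -/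
open Matrix Filter
open scoped ENNReal NNReal

section Aux

attribute [local instance] Matrix.linftyOpNormedAddCommGroup Matrix.linftyOpNormedRing
  Matrix.linftyOpNormedAlgebra

variable {m : Type*} [Fintype m] [DecidableEq m]

noncomputable local instance : CompleteSpace (Matrix m m ℂ) :=
  (by infer_instance : CompleteSpace (m → m → ℂ))

lemma nnnorm_map_complex (N : Matrix m m ℝ) :
    ‖N.map (algebraMap ℝ ℂ)‖₊ = ‖N‖₊ := by
  simp only [Matrix.linfty_opNNNorm_def, Matrix.map_apply]
  congr 1
  ext i
  congr 1
  exact Finset.sum_congr rfl fun j _ => Complex.nnnorm_real (N i j)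

lemma norm_map_complex (N : Matrix m m ℝ) :
    ‖N.map (algebraMap ℝ ℂ)‖ = ‖N‖ :=
  congr_arg NNReal.toReal (nnnorm_map_complex N)

lemma exists_pow_norm_lt_one [Nonempty m] (M : Matrix m m ℝ) (hρ : specRad M < 1) :
    ∃ p : ℕ, 0 < p ∧ ‖M ^ p‖ < 1 := by
  set A : Matrix m m ℂ := M.map (algebraMap ℝ ℂ) with hA
  -- the spectral radius of A is < 1
  have hsr : spectralRadius ℂ A < 1 := by
    obtain ⟨z, hz, hznorm⟩ := spectrum.exists_nnnorm_eq_spectralRadius A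
    rw [← hznorm]
    have hmem : ‖z‖ ∈
        {r : ℝ | ∃ μ ∈ spectrum ℂ (M.map (algebraMap ℝ ℂ)), r = ‖μ‖} :=
      ⟨z, hz, rfl⟩
    have hbdd : BddAbove {r : ℝ | ∃ μ ∈ spectrum ℂ (M.map (algebraMap ℝ ℂ)), r = ‖μ‖} := by
      refine ⟨‖A‖, ?_⟩
      rintro r ⟨μ, hμ, rfl⟩
      exact spectrum.norm_le_norm_of_mem hμ
    have hle : ‖z‖ ≤ specRad M := le_csSup hbdd hmem
    have : ‖z‖ < 1 := lt_of_le_of_lt hle hρ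
    have hz1 : ‖z‖₊ < 1 := by
      rw [← NNReal.coe_lt_coe]
      simpa using this
    exact_mod_cast ENNReal.coe_lt_one_iff.mpr hz1
  -- Gelfand's formula
  have hG := spectrum.pow_nnnorm_pow_one_div_tendsto_nhds_spectralRadius A
  have hev : ∀ᶠ (p : ℕ) in atTop, ((‖A ^ p‖₊ : ℝ≥0∞) ^ (1 / (p : ℝ))) < 1 :=
    hG.eventually_lt_const hsr
  obtain ⟨p, hp1, hp⟩ := (hev.and (eventually_ge_atTop 1)).exists
  refine ⟨p, hp, ?_⟩
  have hp0 : (p : ℝ) ≠ 0 := by positivity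
  have : ((‖A ^ p‖₊ : ℝ≥0∞) ^ (1 / (p : ℝ))) ^ (p : ℝ) < 1 ^ (p : ℝ) := by
    apply ENNReal.rpow_lt_rpow hp1
    positivity
  rw [← ENNReal.rpow_mul, one_div, inv_mul_cancel₀ hp0, ENNReal.rpow_one,
    ENNReal.one_rpow] at this
  have hnn : ‖A ^ p‖₊ < 1 := by exact_mod_cast this
  have : A ^ p = (M ^ p).map (algebraMap ℝ ℂ) := by
    simp only [hA]
    exact (map_pow ((algebraMap ℝ ℂ).mapMatrix) M p).symm
  rw [this, nnnorm_map_complex] at hnn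
  exact hnn

lemma geom_decay [Nonempty m] (M : Matrix m m ℝ) (hρ : specRad M < 1) :
    ∃ C > (0:ℝ), ∃ η : ℝ, 0 ≤ η ∧ η < 1 ∧ ∀ k : ℕ, ‖M ^ k‖ ≤ C * η ^ k := by
  obtain ⟨p, hp0, hp⟩ := exists_pow_norm_lt_one M hρ
  set c : ℝ := max ‖M ^ p‖ (1/2) with hc
  have hc0 : 0 < c := lt_max_of_lt_right (by norm_num)
  have hc1 : c < 1 := max_lt hp (by norm_num)
  set η : ℝ := c ^ ((p : ℝ)⁻¹) with hη
  have hη0 : 0 < η := Real.rpow_pos_of_pos hc0 _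
  have hη1 : η < 1 := by
    apply Real.rpow_lt_one hc0.le hc1
    positivity
  have hηp : η ^ p = c := by
    rw [hη, ← Real.rpow_natCast (c ^ ((p:ℝ)⁻¹)) p, ← Real.rpow_mul hc0.le,
      inv_mul_cancel₀ (by positivity : (p:ℝ) ≠ 0), Real.rpow_one]
  set K : ℝ := max 1 ‖M‖ with hK
  have hK1 : 1 ≤ K := le_max_left _ _
  have hMK : ‖M‖ ≤ K := le_max_right _ _
  -- ‖M^k‖ ≤ K^k
  have hpowK : ∀ k : ℕ, ‖M ^ k‖ ≤ K ^ k := by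
    intro k
    induction k with
    | zero => simpa using norm_one.le
    | succ k ih =>
      calc ‖M ^ (k+1)‖ = ‖M ^ k * M‖ := by rw [pow_succ]
        _ ≤ ‖M ^ k‖ * ‖M‖ := norm_mul_le _ _
        _ ≤ K ^ k * K := by
            apply mul_le_mul ih hMK (norm_nonneg _)
            positivity
        _ = K ^ (k+1) := by ring
  refine ⟨K ^ p / c, by positivity, η, hη0.le, hη1, ?_⟩
  intro k
  induction k using Nat.strong_induction_on with
  | _ k ih =>
    by_cases hk : k < p
    · calc ‖M ^ k‖ ≤ K ^ k := hpowK k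
        _ ≤ K ^ p := pow_le_pow_right₀ hK1 hk.le
        _ = K ^ p / c * η ^ p := by rw [hηp]; field_simp
        _ ≤ K ^ p / c * η ^ k := by
            apply mul_le_mul_of_nonneg_left _ (by positivity)
            exact pow_le_pow_of_le_one hη0.le hη1.le hk.le
    · push_neg at hk
      have hkp : k - p < k := Nat.sub_lt (lt_of_lt_of_le hp0 hk) hp0
      have hsplit : M ^ k = M ^ p * M ^ (k - p) := by
        rw [← pow_add, Nat.add_sub_cancel' hk]
      calc ‖M ^ k‖ ≤ ‖M ^ p‖ * ‖M ^ (k - p)‖ := by rw [hsplit]; exact norm_mul_le _ _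
        _ ≤ c * (K ^ p / c * η ^ (k - p)) := by
            apply mul_le_mul (le_max_left _ _) (ih _ hkp) (norm_nonneg _) hc0.le
        _ = K ^ p / c * (η ^ p * η ^ (k - p)) := by rw [hηp]; ring
        _ = K ^ p / c * η ^ k := by rw [← pow_add, Nat.add_sub_cancel' hk]

lemma geom_decay' [Nonempty m] (M : Matrix m m ℝ) (hρ : specRad M < 1) :
    ∃ C > (0:ℝ), ∃ η : ℝ, 0 ≤ η ∧ η < 1 ∧
      ∀ (k : ℕ) (v : m → ℝ), ‖(M ^ k) *ᵥ v‖ ≤ C * ‖v‖ * η ^ k := by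
  obtain ⟨C, hC, η, hη0, hη1, hbnd⟩ := geom_decay M hρ
  refine ⟨C, hC, η, hη0, hη1, fun k v => ?_⟩
  calc ‖(M ^ k) *ᵥ v‖ ≤ ‖M ^ k‖ * ‖v‖ := Matrix.linfty_opNorm_mulVec _ _
    _ ≤ (C * η ^ k) * ‖v‖ :=
        mul_le_mul_of_nonneg_right (hbnd k) (norm_nonneg _)
    _ = C * ‖v‖ * η ^ k := by ring

end Aux

theorem stmt7 {n : ℕ} (h : ℝ) (hh : 0 < h)
    (β : Fin n → Fin n → ℝ) (δ : Fin n → ℝ)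
    (hβ0 : ∀ i j, 0 ≤ β i j) (hδ0 : ∀ i, 0 ≤ δ i)
    (hδ1 : ∀ i, h * δ i ≤ 1) (hβ1 : ∀ i, h * ∑ j, β i j ≤ 1)
    (hρ : specRad (1 - h • Matrix.diagonal δ + h • Matrix.of β) < 1) :
    ∃ α > (0:ℝ), ∃ η : ℝ, 0 ≤ η ∧ η < 1 ∧
      ∀ x : ℕ → Fin n → ℝ, SISdyn h (fun _ => β) (fun _ => δ) x →
        (∀ i, x 0 i ∈ Set.Icc (0:ℝ) 1) →
        ∀ k, ‖x k‖ ≤ α * ‖x 0‖ * η ^ k := by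
  rcases Nat.eq_zero_or_pos n with hn | hn
  · subst hn
    refine ⟨1, one_pos, 1/2, by norm_num, by norm_num, fun x _ _ k => ?_⟩
    have hx0 : x k = 0 := funext fun i => i.elim0
    rw [hx0, norm_zero]
    positivity
  haveI : Nonempty (Fin n) := ⟨⟨0, hn⟩⟩
  set M : Matrix (Fin n) (Fin n) ℝ := 1 - h • Matrix.diagonal δ + h • Matrix.of β with hM
  obtain ⟨C, hC, η, hη0, hη1, hbnd⟩ := geom_decay' M hρ
  refine ⟨max C 1, lt_max_of_lt_right one_pos, η, hη0, hη1, fun x hx hx0 k => ?_⟩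
  -- entries of M are nonnegative
  have Mentry : ∀ i j, 0 ≤ M i j := by
    intro i j
    have : M i j = (1 : Matrix (Fin n) (Fin n) ℝ) i j - h * (Matrix.diagonal δ) i j + h * β i j := by
      rw [hM]; simp [Matrix.sub_apply, Matrix.add_apply, Matrix.smul_apply, smul_eq_mul]
    rw [this]
    by_cases hij : i = j
    · subst hij
      rw [Matrix.one_apply_eq, Matrix.diagonal_apply_eq]
      have := hδ1 i
      have := mul_nonneg hh.le (hβ0 i i)
      linarith
    · rw [Matrix.one_apply_ne hij, Matrix.diagonal_apply_ne _ hij]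
      have := mul_nonneg hh.le (hβ0 i j)
      linarith
  -- i-th entry of M *ᵥ y
  have Mrow : ∀ (y : Fin n → ℝ) (i), (M *ᵥ y) i = y i - h * (δ i * y i) + h * ∑ j, β i j * y j := by
    intro y i
    have e : M *ᵥ y = y - h • (Matrix.diagonal δ *ᵥ y) + h • (Matrix.of β *ᵥ y) := by
      rw [hM, Matrix.add_mulVec, Matrix.sub_mulVec, Matrix.one_mulVec,
        Matrix.smul_mulVec, Matrix.smul_mulVec]
    rw [e]
    simp only [Pi.add_apply, Pi.sub_apply, Pi.smul_apply, smul_eq_mul,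
      Matrix.mulVec_diagonal]
    rfl
  -- monotonicity of M *ᵥ on nonneg vectors
  have Mmono : ∀ (u v : Fin n → ℝ), (∀ i, u i ≤ v i) → ∀ i, (M *ᵥ u) i ≤ (M *ᵥ v) i := by
    intro u v huv i
    simp only [Matrix.mulVec, dotProduct]
    exact Finset.sum_le_sum fun j _ => mul_le_mul_of_nonneg_left (huv j) (Mentry i j)
  -- the key invariant
  have key : ∀ k, ∀ i, 0 ≤ x k i ∧ x k i ≤ 1 ∧ x k i ≤ ((M ^ k) *ᵥ x 0) i := by
    intro k
    induction k with
    | zero =>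
      intro i
      have h0 := (hx0 i).1
      have h1 := (hx0 i).2
      refine ⟨h0, h1, ?_⟩
      rw [pow_zero, Matrix.one_mulVec]
    | succ k ih =>
      intro i
      have hx0i := fun j => (ih j).1
      have hx1i := fun j => (ih j).2.1
      have hxMi := fun j => (ih j).2.2
      set s : ℝ := ∑ j, β i j * x k j with hs
      have hs0 : 0 ≤ s :=
        Finset.sum_nonneg fun j _ => mul_nonneg (hβ0 i j) (hx0i j)
      have hs1 : h * s ≤ 1 := by
        have : s ≤ ∑ j, β i j := by
          apply Finset.sum_le_sum
          intro j _
          nlinarith [hβ0 i j, hx1i j]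
        calc h * s ≤ h * ∑ j, β i j := mul_le_mul_of_nonneg_left this hh.le
          _ ≤ 1 := hβ1 i
      have e : x (k + 1) i = x k i * (1 - h * δ i) + h * ((1 - x k i) * s) := by
        rw [hx k i]; ring
      have hδi := hδ1 i
      have hδi0 := hδ0 i
      have hxk0 := hx0i i
      have hxk1 := hx1i i
      have t1 : 0 ≤ x k i * (1 - h * δ i) := mul_nonneg hxk0 (by linarith)
      have t2 : 0 ≤ h * ((1 - x k i) * s) :=
        mul_nonneg hh.le (mul_nonneg (by linarith) hs0)
      refine ⟨by rw [e]; linarith, ?_, ?_⟩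
      · -- x (k+1) i ≤ 1
        rw [e]
        have u1 : x k i * (1 - h * δ i) ≤ x k i := by nlinarith [mul_nonneg hxk0 (mul_nonneg hh.le hδi0)]
        have u2 : h * ((1 - x k i) * s) ≤ 1 - x k i := by nlinarith
        linarith
      · -- x (k+1) i ≤ (M^(k+1) *ᵥ x 0) i
        have step1 : x (k + 1) i ≤ (M *ᵥ x k) i := by
          rw [e, Mrow (x k) i]
          have : (1 - x k i) * s ≤ s := by nlinarith
          nlinarith
        have step2 : (M *ᵥ x k) i ≤ (M *ᵥ ((M ^ k) *ᵥ x 0)) i := Mmono _ _ hxMi i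
        have step3 : M *ᵥ ((M ^ k) *ᵥ x 0) = (M ^ (k + 1)) *ᵥ x 0 := by
          rw [Matrix.mulVec_mulVec, ← pow_succ']
        calc x (k + 1) i ≤ (M *ᵥ x k) i := step1
          _ ≤ (M *ᵥ ((M ^ k) *ᵥ x 0)) i := step2
          _ = ((M ^ (k + 1)) *ᵥ x 0) i := by rw [step3]
  -- conclude
  have hnorm : ‖x k‖ ≤ ‖(M ^ k) *ᵥ x 0‖ := by
    apply pi_norm_le_iff_of_nonneg (norm_nonneg _) |>.2
    intro i
    have h0 := (key k i).1
    have hle := (key k i).2.2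
    rw [Real.norm_eq_abs, abs_of_nonneg h0]
    exact hle.trans ((le_abs_self _).trans (by simpa [Real.norm_eq_abs] using norm_le_pi_norm ((M ^ k) *ᵥ x 0) i))
  calc ‖x k‖ ≤ ‖(M ^ k) *ᵥ x 0‖ := hnorm
    _ ≤ C * ‖x 0‖ * η ^ k := hbnd k (x 0)
    _ ≤ max C 1 * ‖x 0‖ * η ^ k := by
        apply mul_le_mul_of_nonneg_right _ (by positivity)
        exact mul_le_mul_of_nonneg_right (le_max_left _ _) (norm_nonneg _)
end

section
/- Let M be a nonnegative matrix with ρ(M) < 1 and P ≻ 0 a diagonal matrix with MᵀPM - P ≺ 0 (guaranteed to exist). Then for the SIS update x(k+1) = x(k) + h((I - X(k))B̄ - D)x(k) = (M - hX(k)B̄)x(k) with x(k) ∈ [0,1]^n and M = I - hD + hB̄, the Lyapunov function V(x) = xᵀPx satisfies V(x(k+1)) - V(x(k)) ≤ xᵀ(MᵀPM - P)x. -/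
open Matrix Filter

theorem stmt8 {n : ℕ} (h : ℝ) (hh : 0 < h)
    (β : Fin n → Fin n → ℝ) (δ : Fin n → ℝ)
    (hβ0 : ∀ i j, 0 ≤ β i j) (hδ0 : ∀ i, 0 ≤ δ i)
    (hδ1 : ∀ i, h * δ i ≤ 1) (hβ1 : ∀ i, h * ∑ j, β i j ≤ 1)
    (M P : Matrix (Fin n) (Fin n) ℝ)
    (hMdef : M = 1 - h • Matrix.diagonal δ + h • Matrix.of β)
    (hρ : specRad M < 1) (hPdiag : P.IsDiag) (hP : P.PosDef)
    (hLyap : (-(Mᵀ * P * M - P)).PosDef)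
    (x : Fin n → ℝ) (hx : ∀ i, x i ∈ Set.Icc (0:ℝ) 1)
    (y : Fin n → ℝ)
    (hy : y = (M - h • (Matrix.diagonal x * Matrix.of β)).mulVec x) :
    y ⬝ᵥ P.mulVec y - x ⬝ᵥ P.mulVec x ≤ x ⬝ᵥ (Mᵀ * P * M - P).mulVec x := by
  have hsub : (Mᵀ * P * M - P).mulVec x = (Mᵀ * P * M).mulVec x - P.mulVec x := by
    rw [Matrix.sub_mulVec]
  rw [hsub, dotProduct_sub]
  have key : x ⬝ᵥ (Mᵀ * P * M).mulVec x = (M.mulVec x) ⬝ᵥ P.mulVec (M.mulVec x) := by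
    rw [← Matrix.mulVec_mulVec, ← Matrix.mulVec_mulVec, Matrix.dotProduct_mulVec,
      Matrix.vecMul_transpose]
  rw [key]
  have hmain : y ⬝ᵥ P.mulVec y ≤ (M.mulVec x) ⬝ᵥ P.mulVec (M.mulVec x) := by
    set m := M.mulVec x with hm
    have hPd : P = Matrix.diagonal P.diag := (hPdiag.diagonal_diag).symm
    have hPpos : ∀ i, 0 < P i i := by
      intro i
      have := Matrix.posDef_diagonal_iff.mp (hPd ▸ hP) i
      simpa [Matrix.diag] using this
    have hPmul : ∀ (v : Fin n → ℝ) i, P.mulVec v i = P i i * v i := by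
      intro v i
      conv_lhs => rw [hPd]
      simp [Matrix.mulVec_diagonal, Matrix.diag]
    have hmi : ∀ i, m i = (1 - h * δ i) * x i + h * ∑ j, β i j * x j := by
      intro i
      simp only [hm, hMdef, Matrix.mulVec, dotProduct, Matrix.add_apply,
        Matrix.sub_apply, Matrix.smul_apply, Matrix.one_apply, Matrix.diagonal_apply,
        Matrix.of_apply, smul_eq_mul]
      rw [Finset.sum_congr rfl (fun j _ => by by_cases hij : i = j <;> simp [hij] <;> ring :
        ∀ j ∈ Finset.univ, ((if i = j then (1:ℝ) else 0) - h * (if i = j then δ i else 0)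
          + h * β i j) * x j = (if i = j then (1 - h * δ i) * x j else 0) + h * (β i j * x j))]
      rw [Finset.sum_add_distrib, Finset.sum_ite_eq, ← Finset.mul_sum]
      simp
    have hyi : ∀ i, y i = m i - h * (x i * ∑ j, β i j * x j) := by
      intro i
      have hXB : ((Matrix.diagonal x * Matrix.of β).mulVec x) i
          = x i * ∑ j, β i j * x j := by
        rw [← Matrix.mulVec_mulVec, Matrix.mulVec_diagonal]
        simp [Matrix.mulVec, dotProduct]
      rw [hy]
      simp only [Matrix.sub_mulVec, Matrix.smul_mulVec, Pi.sub_apply, Pi.smul_apply,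
        smul_eq_mul, hm, hXB]
    have hb : ∀ i, 0 ≤ ∑ j, β i j * x j := fun i =>
      Finset.sum_nonneg fun j _ => mul_nonneg (hβ0 i j) (hx j).1
    have hybound : ∀ i, 0 ≤ y i ∧ y i ≤ m i := by
      intro i
      have hx0 := (hx i).1
      have hx1 := (hx i).2
      have hbi := hb i
      have hδi : 0 ≤ 1 - h * δ i := by linarith [hδ1 i]
      constructor
      · rw [hyi i, hmi i]
        have h1 : 0 ≤ (1 - h * δ i) * x i := mul_nonneg hδi hx0
        have h2 : h * (x i * ∑ j, β i j * x j) ≤ h * ∑ j, β i j * x j := by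
          apply mul_le_mul_of_nonneg_left _ hh.le
          nlinarith
        linarith
      · rw [hyi i]
        have : 0 ≤ h * (x i * ∑ j, β i j * x j) :=
          mul_nonneg hh.le (mul_nonneg hx0 hbi)
        linarith
    simp only [dotProduct]
    apply Finset.sum_le_sum
    intro i _
    rw [hPmul, hPmul]
    obtain ⟨h0, h1⟩ := hybound i
    have hsq : y i * y i ≤ m i * m i := mul_le_mul h1 h1 h0 (h0.trans h1)
    nlinarith [mul_le_mul_of_nonneg_left hsq (hPpos i).le]
  linarith [hmain]
end

section
/- For the p-periodic discrete-time SIS system under strong connectivity, if the disease-free equilibrium is asymptotically stable, then ρ(M(k+p-1)⋯M(k)) ≤ 1 (equivalently, by index-independence of the spectrum, for all k). -/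
open Matrix Filter

namespace SIS
variable {n : ℕ}

lemma mono_zero (M : ℕ → Matrix (Fin n) (Fin n) ℝ) (k : ℕ) : mono 0 M k = 1 := rfl

lemma mono_succ (m : ℕ) (M : ℕ → Matrix (Fin n) (Fin n) ℝ) (k : ℕ) :
    mono (m + 1) M k = M (k + m) * mono m M k := by
  unfold mono
  rw [List.range_succ, List.foldl_append, List.foldl_cons, List.foldl_nil]

lemma mono_one (M : ℕ → Matrix (Fin n) (Fin n) ℝ) (k : ℕ) : mono 1 M k = M k := by
  rw [mono_succ, mono_zero, mul_one, Nat.add_zero]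

lemma mono_add (a b : ℕ) (M : ℕ → Matrix (Fin n) (Fin n) ℝ) (k : ℕ) :
    mono (a + b) M k = mono b M (k + a) * mono a M k := by
  induction b with
  | zero => rw [Nat.add_zero, mono_zero, one_mul]
  | succ b ih =>
      rw [← Nat.add_assoc, mono_succ, ih, mono_succ, Nat.add_assoc, mul_assoc]

lemma mono_per {p : ℕ} {M : ℕ → Matrix (Fin n) (Fin n) ℝ} (hMper : ∀ j, M (j + p) = M j)
    (q k : ℕ) : mono q M (k + p) = mono q M k := by
  induction q with
  | zero => rfl
  | succ q ih =>
      rw [mono_succ, mono_succ, ih, show k + p + q = k + q + p by omega, hMper]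

lemma mono_pow {p : ℕ} {M : ℕ → Matrix (Fin n) (Fin n) ℝ} (hMper : ∀ j, M (j + p) = M j)
    (m : ℕ) : (mono p M 0) ^ m = mono (m * p) M 0 := by
  induction m with
  | zero => rw [pow_zero, Nat.zero_mul, mono_zero]
  | succ m ih =>
      have hshift : ∀ m : ℕ, mono p M (m * p) = mono p M 0 := by
        intro m
        induction m with
        | zero => rw [Nat.zero_mul]
        | succ m ih2 =>
            rw [show (m + 1) * p = m * p + p by ring, mono_per hMper, ih2]
      rw [pow_succ', ih, show (m+1)*p = m*p + p by ring, mono_add, Nat.zero_add, hshift]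

end SIS

namespace SIS
variable {n : ℕ} {p : ℕ} {h : ℝ} {β : ℕ → Fin n → Fin n → ℝ} {δ : ℕ → Fin n → ℝ}
  {Mm : ℕ → Matrix (Fin n) (Fin n) ℝ}

lemma Mm_apply (hM : ∀ k, Mm k = 1 - h • Matrix.diagonal (δ k) + h • Matrix.of (β k))
    (k : ℕ) (i j : Fin n) :
    Mm k i j = (if i = j then 1 - h * δ k i else 0) + h * β k i j := by
  rw [hM]
  simp [Matrix.add_apply, Matrix.sub_apply, Matrix.smul_apply, Matrix.one_apply,
    Matrix.diagonal_apply, smul_eq_mul]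
  split <;> ring

lemma Mm_nonneg (hM : ∀ k, Mm k = 1 - h • Matrix.diagonal (δ k) + h • Matrix.of (β k))
    (hh : 0 < h) (hβ0 : ∀ k i j, 0 ≤ β k i j) (hδ1 : ∀ k i, h * δ k i ≤ 1)
    (k : ℕ) (i j : Fin n) : 0 ≤ Mm k i j := by
  rw [Mm_apply hM]
  have := hδ1 k i
  have := hβ0 k i j
  have : 0 ≤ h * β k i j := mul_nonneg hh.le (hβ0 k i j)
  split <;> linarith

lemma mono_nonneg (hMn : ∀ k i j, 0 ≤ Mm k i j) (q k : ℕ) (i j : Fin n) :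
    0 ≤ mono q Mm k i j := by
  induction q generalizing i j with
  | zero =>
      rw [mono_zero]
      by_cases hij : i = j <;> simp [Matrix.one_apply, hij]
  | succ q ih =>
      rw [mono_succ, Matrix.mul_apply]
      exact Finset.sum_nonneg fun l _ => mul_nonneg (hMn _ _ _) (ih _ _)

lemma mulVec_Mm (hM : ∀ k, Mm k = 1 - h • Matrix.diagonal (δ k) + h • Matrix.of (β k))
    (k : ℕ) (t : Fin n → ℝ) (i : Fin n) :
    (Mm k *ᵥ t) i = (1 - h * δ k i) * t i + h * ∑ j, β k i j * t j := by
  simp only [Matrix.mulVec, dotProduct, Mm_apply hM, add_mul, ite_mul, zero_mul,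
    Finset.sum_add_distrib, Finset.sum_ite_eq, Finset.mem_univ, if_true, Finset.mul_sum]
  ring_nf

end SIS

namespace SIS

def traj {n : ℕ} (h : ℝ) (β : ℕ → Fin n → Fin n → ℝ) (δ : ℕ → Fin n → ℝ)
    (x0 : Fin n → ℝ) : ℕ → Fin n → ℝ
  | 0 => x0
  | (k+1) => fun i => traj h β δ x0 k i +
      h * ((1 - traj h β δ x0 k i) * (∑ j, β k i j * traj h β δ x0 k j)
        - δ k i * traj h β δ x0 k i)

variable {n : ℕ} {p : ℕ} {h : ℝ} {β : ℕ → Fin n → Fin n → ℝ} {δ : ℕ → Fin n → ℝ}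
  {Mm : ℕ → Matrix (Fin n) (Fin n) ℝ}

lemma traj_dyn (x0 : Fin n → ℝ) : SISdyn h β δ (traj h β δ x0) := fun _ _ => rfl

lemma traj_mem (hh : 0 < h) (hβ0 : ∀ k i j, 0 ≤ β k i j) (hδ0 : ∀ k i, 0 ≤ δ k i)
    (hδ1 : ∀ k i, h * δ k i ≤ 1) (hβ1 : ∀ k i, h * ∑ j, β k i j ≤ 1)
    {x0 : Fin n → ℝ} (hx0 : ∀ i, x0 i ∈ Set.Icc (0:ℝ) 1) :
    ∀ k i, traj h β δ x0 k i ∈ Set.Icc (0:ℝ) 1 := by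
  intro k
  induction k with
  | zero => exact hx0
  | succ k ih =>
      intro i
      set t := traj h β δ x0 k with ht
      have h0i := (ih i).1
      have h1i := (ih i).2
      have hS0 : 0 ≤ ∑ j, β k i j * t j :=
        Finset.sum_nonneg fun j _ => mul_nonneg (hβ0 k i j) (ih j).1
      have hS1 : ∑ j, β k i j * t j ≤ ∑ j, β k i j :=
        Finset.sum_le_sum fun j _ => by
          nlinarith [(ih j).2, hβ0 k i j]
      have hhS : h * ∑ j, β k i j * t j ≤ 1 :=
        le_trans (mul_le_mul_of_nonneg_left hS1 hh.le) (hβ1 k i)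
      have hd1 := hδ1 k i
      have hd0 : 0 ≤ h * δ k i := mul_nonneg hh.le (hδ0 k i)
      constructor
      · show (0:ℝ) ≤ t i + h * ((1 - t i) * (∑ j, β k i j * t j) - δ k i * t i)
        nlinarith [mul_nonneg (mul_nonneg hh.le (sub_nonneg.2 h1i)) hS0,
          mul_nonneg (sub_nonneg.2 hd1) h0i]
      · show t i + h * ((1 - t i) * (∑ j, β k i j * t j) - δ k i * t i) ≤ 1
        nlinarith [mul_nonneg hd0 h0i, mul_le_mul_of_nonneg_left hhS (sub_nonneg.2 h1i)]

lemma traj_lower (hM : ∀ k, Mm k = 1 - h • Matrix.diagonal (δ k) + h • Matrix.of (β k))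
    (hh : 0 < h) (hβ0 : ∀ k i j, 0 ≤ β k i j) (hδ0 : ∀ k i, 0 ≤ δ k i)
    (hδ1 : ∀ k i, h * δ k i ≤ 1)
    {x0 : Fin n → ℝ} {b : ℝ} (hb0 : 0 < b) (hb1 : b ≤ 1)
    (hbd : ∀ k i, 0 ≤ traj h β δ x0 k i ∧ traj h β δ x0 k i ≤ b) :
    ∀ m i, (1 - b) ^ m * ((mono m Mm 0 *ᵥ x0) i) ≤ traj h β δ x0 m i := by
  have hMn := Mm_nonneg hM hh hβ0 hδ1
  intro m
  induction m with
  | zero =>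
      intro i
      simp [mono_zero, Matrix.one_mulVec, traj]
  | succ m ih =>
      intro i
      set t := traj h β δ x0 m with ht
      have hS0 : 0 ≤ ∑ j, β m i j * t j :=
        Finset.sum_nonneg fun j _ => mul_nonneg (hβ0 m i j) (hbd m j).1
      have step1 : (1 - b) * ((Mm m *ᵥ t) i) ≤ traj h β δ x0 (m+1) i := by
        show (1 - b) * ((Mm m *ᵥ t) i)
          ≤ t i + h * ((1 - t i) * (∑ j, β m i j * t j) - δ m i * t i)
        rw [mulVec_Mm hM]
        have h1 : 0 ≤ (1 - h * δ m i) * t i :=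
          mul_nonneg (by linarith [hδ1 m i]) (hbd m i).1
        have h2 : 0 ≤ h * (∑ j, β m i j * t j) * (b - t i) :=
          mul_nonneg (mul_nonneg hh.le hS0) (by linarith [(hbd m i).2])
        nlinarith [mul_nonneg hb0.le h1]
      -- monotonicity step
      have hmono : (1 - b) ^ m * ((mono (m+1) Mm 0 *ᵥ x0) i) ≤ (Mm m *ᵥ t) i := by
        rw [mono_succ, Nat.zero_add, ← Matrix.mulVec_mulVec]
        rw [Matrix.mulVec, Matrix.mulVec, dotProduct, dotProduct,
          Finset.mul_sum]
        refine Finset.sum_le_sum fun j _ => ?_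
        have := ih j
        calc (1 - b) ^ m * (Mm m i j * (mono m Mm 0 *ᵥ x0) j)
            = Mm m i j * ((1 - b) ^ m * (mono m Mm 0 *ᵥ x0) j) := by ring
          _ ≤ Mm m i j * t j := mul_le_mul_of_nonneg_left (ih j) (hMn m i j)
      calc (1 - b) ^ (m + 1) * ((mono (m+1) Mm 0 *ᵥ x0) i)
          = (1 - b) * ((1 - b) ^ m * ((mono (m+1) Mm 0 *ᵥ x0) i)) := by ring
        _ ≤ (1 - b) * ((Mm m *ᵥ t) i) :=
            mul_le_mul_of_nonneg_left hmono (by linarith)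
        _ ≤ traj h β δ x0 (m+1) i := step1

end SIS

namespace SIS
section spectral

attribute [local instance] Matrix.linftyOpNormedRing Matrix.linftyOpNormedAlgebra

variable {n : ℕ}

lemma norm_map_le {A : Matrix (Fin n) (Fin n) ℝ} {c : ℝ} (hc0 : 0 ≤ c)
    (h0 : ∀ i j, 0 ≤ A i j) (hc : ∀ i, ∑ j, A i j ≤ c) :
    ‖A.map (algebraMap ℝ ℂ)‖ ≤ c := by
  rw [Matrix.linfty_opNorm_def, ← Real.coe_toNNReal c hc0, NNReal.coe_le_coe]
  refine Finset.sup_le fun i _ => ?_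
  rw [← NNReal.coe_le_coe, NNReal.coe_sum, Real.coe_toNNReal c hc0]
  calc ∑ j, ((‖(A.map (algebraMap ℝ ℂ)) i j‖₊ : ℝ)) = ∑ j, A i j := by
        refine Finset.sum_congr rfl fun j _ => ?_
        rw [coe_nnnorm, Matrix.map_apply]
        simp only [Complex.coe_algebraMap, Complex.norm_real, Real.norm_eq_abs]
        exact abs_of_nonneg (h0 i j)
    _ ≤ c := hc i

lemma le_one_of_pow_le_const {x C : ℝ} (hx : 0 ≤ x) (hle : ∀ m : ℕ, x ^ m ≤ C) : x ≤ 1 := by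
  by_contra hx1
  push_neg at hx1
  obtain ⟨m, hm⟩ := ((tendsto_pow_atTop_atTop_of_one_lt hx1).eventually_gt_atTop C).exists
  exact absurd (hle m) (not_le.2 hm)

lemma le_one_of_forall_b {c : ℝ} {p : ℕ}
    (hb : ∀ b : ℝ, 0 < b → b < 1 → c * (1 - b) ^ p ≤ 1) : c ≤ 1 := by
  have hcont : Continuous fun b : ℝ => c * (1 - b) ^ p :=
    continuous_const.mul ((continuous_const.sub continuous_id).pow p)
  have htend : Tendsto (fun b : ℝ => c * (1 - b) ^ p)
      (nhdsWithin 0 (Set.Ioi 0)) (nhds c) := by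
    have := (hcont.tendsto 0).mono_left (nhdsWithin_le_nhds (s := Set.Ioi (0:ℝ)))
    simpa using this
  refine le_of_tendsto htend ?_
  filter_upwards [eventually_nhdsWithin_of_eventually_nhds (eventually_lt_nhds one_pos),
    self_mem_nhdsWithin] with b hb1 hb0
  exact hb b hb0 hb1

end spectral
end SIS

namespace SIS
section spectral2

attribute [local instance] Matrix.linftyOpNormedRing Matrix.linftyOpNormedAlgebra

variable {n : ℕ} {p : ℕ} {h : ℝ} {β : ℕ → Fin n → Fin n → ℝ} {δ : ℕ → Fin n → ℝ}
  {Mm : ℕ → Matrix (Fin n) (Fin n) ℝ}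

lemma Mm_per (hM : ∀ k, Mm k = 1 - h • Matrix.diagonal (δ k) + h • Matrix.of (β k))
    (hperβ : ∀ k, β (k + p) = β k) (hperδ : ∀ k, δ (k + p) = δ k) :
    ∀ j, Mm (j + p) = Mm j := fun j => by rw [hM, hM, hperβ, hperδ]

lemma spec_zero [Nonempty (Fin n)] (hh : 0 < h)
    (hperβ : ∀ k, β (k + p) = β k) (hperδ : ∀ k, δ (k + p) = δ k)
    (hβ0 : ∀ k i j, 0 ≤ β k i j) (hδ0 : ∀ k i, 0 ≤ δ k i)
    (hδ1 : ∀ k i, h * δ k i ≤ 1) (hβ1 : ∀ k i, h * ∑ j, β k i j ≤ 1)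
    (hM : ∀ k, Mm k = 1 - h • Matrix.diagonal (δ k) + h • Matrix.of (β k))
    (hstab : ∀ ε > (0:ℝ), ∃ d > (0:ℝ), ∀ x : ℕ → Fin n → ℝ, SISdyn h β δ x →
        (∀ i, x 0 i ∈ Set.Icc (0:ℝ) 1) → ‖x 0‖ < d → ∀ k, ‖x k‖ < ε) :
    ∀ μ ∈ spectrum ℂ ((mono p Mm 0).map (algebraMap ℝ ℂ)), ‖μ‖ ≤ 1 := by
  intro μ hμ
  have hMn := Mm_nonneg hM hh hβ0 hδ1
  have hMper := Mm_per hM hperβ hperδ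
  refine le_one_of_forall_b (p := p) ?_
  intro b hb0 hb1
  obtain ⟨d, hd0, hd⟩ := hstab b hb0
  set s := min (d / 2) 1 with hs
  have hs0 : 0 < s := lt_min (by linarith) one_pos
  have hs1 : s ≤ 1 := min_le_right _ _
  set x0 : Fin n → ℝ := fun _ => s with hx0
  have hx0mem : ∀ i, x0 i ∈ Set.Icc (0:ℝ) 1 := fun i => ⟨hs0.le, hs1⟩
  have hnorm0 : ‖x0‖ < d := by
    have h1 : ‖x0‖ ≤ s := by
      rw [pi_norm_le_iff_of_nonneg hs0.le]
      intro i
      simp [hx0, Real.norm_eq_abs, abs_of_nonneg hs0.le]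
    have := min_le_left (d / 2) 1
    linarith
  have hbnd := hd (traj h β δ x0) (traj_dyn x0) hx0mem hnorm0
  have hmem := traj_mem hh hβ0 hδ0 hδ1 hβ1 hx0mem
  have hbd : ∀ k i, 0 ≤ traj h β δ x0 k i ∧ traj h β δ x0 k i ≤ b := by
    intro k i
    refine ⟨(hmem k i).1, ?_⟩
    calc traj h β δ x0 k i ≤ |traj h β δ x0 k i| := le_abs_self _
      _ ≤ ‖traj h β δ x0 k‖ := by
          rw [← Real.norm_eq_abs]; exact norm_le_pi_norm _ i
      _ ≤ b := (hbnd k).le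
  have hlow := traj_lower hM hh hβ0 hδ0 hδ1 hb0 hb1.le hbd
  have hrow : ∀ m i, ∑ j, mono m Mm 0 i j ≤ b / (s * (1 - b) ^ m) := by
    intro m i
    have h1 := hlow m i
    have h2 : traj h β δ x0 m i ≤ b := (hbd m i).2
    have h3 : (mono m Mm 0 *ᵥ x0) i = (∑ j, mono m Mm 0 i j) * s := by
      simp [Matrix.mulVec, dotProduct, hx0, Finset.sum_mul]
    have hpow : (0:ℝ) < (1 - b) ^ m := pow_pos (by linarith) m
    rw [h3] at h1
    rw [le_div_iff₀ (by positivity)]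
    nlinarith
  -- norm of powers
  have hnormpow : ∀ m : ℕ,
      ‖μ‖ ^ m ≤ b / (s * (1 - b) ^ (m * p)) := by
    intro m
    have hpm : μ ^ m ∈ spectrum ℂ (((mono p Mm 0).map (algebraMap ℝ ℂ)) ^ m) :=
      spectrum.pow_image_subset _ m ⟨μ, hμ, rfl⟩
    have heq : ((mono p Mm 0).map (algebraMap ℝ ℂ)) ^ m
        = (mono (m * p) Mm 0).map (algebraMap ℝ ℂ) := by
      rw [← RingHom.mapMatrix_apply, ← map_pow, mono_pow hMper, RingHom.mapMatrix_apply]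
    rw [heq] at hpm
    have hnorm := spectrum.norm_le_norm_of_mem hpm
    have hpowm : (0:ℝ) < (1 - b) ^ (m * p) := pow_pos (by linarith) _
    have hc0 : (0:ℝ) ≤ b / (s * (1 - b) ^ (m * p)) :=
      (div_pos hb0 (mul_pos hs0 hpowm)).le
    have hle := norm_map_le hc0 (fun i j => mono_nonneg hMn (m * p) 0 i j)
      (fun i => hrow (m * p) i)
    calc ‖μ‖ ^ m = ‖μ ^ m‖ := by
          rw [norm_pow]
      _ ≤ ‖(mono (m * p) Mm 0).map (algebraMap ℝ ℂ)‖ := hnorm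
      _ ≤ b / (s * (1 - b) ^ (m * p)) := hle
  refine le_one_of_pow_le_const (C := b / s)
    (mul_nonneg (norm_nonneg μ) (pow_nonneg (by linarith) p)) fun m => ?_
  have hpow : (0:ℝ) < (1 - b) ^ (m * p) := pow_pos (by linarith) _
  have h1 := hnormpow m
  rw [mul_pow, ← pow_mul, mul_comm p m]
  rw [← div_div] at h1
  exact (le_div_iff₀ hpow).mp h1

end spectral2
end SIS

namespace SIS
variable {n : ℕ} {p : ℕ} {h : ℝ} {β : ℕ → Fin n → Fin n → ℝ} {δ : ℕ → Fin n → ℝ}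
  {Mm : ℕ → Matrix (Fin n) (Fin n) ℝ}

lemma spec_all [Nonempty (Fin n)] (hp : 0 < p) (hh : 0 < h)
    (hperβ : ∀ k, β (k + p) = β k) (hperδ : ∀ k, δ (k + p) = δ k)
    (hβ0 : ∀ k i j, 0 ≤ β k i j) (hδ0 : ∀ k i, 0 ≤ δ k i)
    (hδ1 : ∀ k i, h * δ k i ≤ 1) (hβ1 : ∀ k i, h * ∑ j, β k i j ≤ 1)
    (hM : ∀ k, Mm k = 1 - h • Matrix.diagonal (δ k) + h • Matrix.of (β k))
    (hstab : ∀ ε > (0:ℝ), ∃ d > (0:ℝ), ∀ x : ℕ → Fin n → ℝ, SISdyn h β δ x →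
        (∀ i, x 0 i ∈ Set.Icc (0:ℝ) 1) → ‖x 0‖ < d → ∀ k, ‖x k‖ < ε) :
    ∀ k, ∀ μ ∈ spectrum ℂ ((mono p Mm k).map (algebraMap ℝ ℂ)), ‖μ‖ ≤ 1 := by
  intro k
  induction k with
  | zero => exact spec_zero hh hperβ hperδ hβ0 hδ0 hδ1 hβ1 hM hstab
  | succ k ih =>
      intro μ hμ
      rcases eq_or_ne μ 0 with rfl | hμ0
      · simp
      obtain ⟨p', rfl⟩ : ∃ p', p = p' + 1 := ⟨p - 1, (Nat.succ_pred_eq_of_pos hp).symm⟩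
      have hMper := Mm_per (p := p' + 1) hM hperβ hperδ
      have hk1 : mono (p' + 1) Mm (k + 1) = Mm k * mono p' Mm (k + 1) := by
        rw [mono_succ, show k + 1 + p' = k + (p' + 1) by omega, hMper]
      have hk : mono (p' + 1) Mm k = mono p' Mm (k + 1) * Mm k := by
        rw [show p' + 1 = 1 + p' from Nat.add_comm p' 1, mono_add, mono_one]
      set A := (mono p' Mm (k + 1)).map (algebraMap ℝ ℂ) with hA
      set B := (Mm k).map (algebraMap ℝ ℂ) with hB
      have h1 : ((mono (p' + 1) Mm (k + 1)).map (algebraMap ℝ ℂ)) = B * A := by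
        rw [hk1, Matrix.map_mul]
      have h2 : ((mono (p' + 1) Mm k).map (algebraMap ℝ ℂ)) = A * B := by
        rw [hk, Matrix.map_mul]
      have hswap := spectrum.nonzero_mul_comm (𝕜 := ℂ) A B
      have hmem : μ ∈ spectrum ℂ (A * B) := by
        have hmem' : μ ∈ spectrum ℂ (B * A) \ {0} := ⟨h1 ▸ hμ, hμ0⟩
        rw [← hswap] at hmem'
        exact hmem'.1
      exact ih μ (h2 ▸ hmem)

end SIS

theorem stmt10 {n : ℕ} (p : ℕ) (hp : 0 < p) (h : ℝ) (hh : 0 < h)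
    (β : ℕ → Fin n → Fin n → ℝ) (δ : ℕ → Fin n → ℝ)
    (hperβ : ∀ k, β (k + p) = β k) (hperδ : ∀ k, δ (k + p) = δ k)
    (hβ0 : ∀ k i j, 0 ≤ β k i j) (hδ0 : ∀ k i, 0 ≤ δ k i)
    (hδ1 : ∀ k i, h * δ k i ≤ 1) (hβ1 : ∀ k i, h * ∑ j, β k i j ≤ 1)
    (hirr : ∀ k, MatIrreducible (Matrix.of (β k)))
    (Mm : ℕ → Matrix (Fin n) (Fin n) ℝ)
    (hM : ∀ k, Mm k = 1 - h • Matrix.diagonal (δ k) + h • Matrix.of (β k))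
    (hstab : ∀ ε > (0:ℝ), ∃ d > (0:ℝ), ∀ x : ℕ → Fin n → ℝ, SISdyn h β δ x →
        (∀ i, x 0 i ∈ Set.Icc (0:ℝ) 1) → ‖x 0‖ < d → ∀ k, ‖x k‖ < ε)
    (hattr : ∃ r > (0:ℝ), ∀ x : ℕ → Fin n → ℝ, SISdyn h β δ x →
        (∀ i, x 0 i ∈ Set.Icc (0:ℝ) 1) → ‖x 0‖ < r →
        Filter.Tendsto x Filter.atTop (nhds 0)) :
    ∀ k, specRad (mono p Mm k) ≤ 1 := by
  intro k
  refine Real.sSup_le ?_ zero_le_one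
  rintro r ⟨μ, hμ, rfl⟩
  rcases Nat.eq_zero_or_pos n with hn | hn
  · exfalso
    subst hn
    haveI : Subsingleton (Matrix (Fin 0) (Fin 0) ℂ) :=
      ⟨fun a b => by ext i j; exact absurd i.isLt (by omega)⟩
    exact spectrum.mem_iff.mp hμ (isUnit_of_subsingleton _)
  · haveI : Nonempty (Fin n) := ⟨⟨0, hn⟩⟩
    exact SIS.spec_all hp hh hperβ hperδ hβ0 hδ0 hδ1 hβ1 hM hstab k μ hμ
end

section
/- For the p-periodic discrete-time SIS system with controlled healing rates δ_i(k) = Σ_j β̄_ij(k) + γ_i, where γ_i > 0 and h(Σ_j β̄_ij(k) + γ_i) ≤ 1 for all i and k, the disease-free equilibrium x = 0 is globally exponentially stable on [0,1]^n. -/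
open Matrix Filter

theorem stmt13 {n : ℕ} (p : ℕ) (hp : 0 < p) (h : ℝ) (hh : 0 < h)
    (β : ℕ → Fin n → Fin n → ℝ) (γ : Fin n → ℝ)
    (hperβ : ∀ k, β (k + p) = β k)
    (hβ0 : ∀ k i j, 0 ≤ β k i j) (hγ : ∀ i, 0 < γ i)
    (hbound : ∀ k i, h * ((∑ j, β k i j) + γ i) ≤ 1) :
    ∃ α > (0:ℝ), ∃ η : ℝ, 0 ≤ η ∧ η < 1 ∧
      ∀ x : ℕ → Fin n → ℝ,
        SISdyn h β (fun k i => (∑ j, β k i j) + γ i) x →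
        (∀ i, x 0 i ∈ Set.Icc (0:ℝ) 1) →
        ∀ k, ‖x k‖ ≤ α * ‖x 0‖ * η ^ k := by
  rcases Nat.eq_zero_or_pos n with hn | hn
  · refine ⟨1, one_pos, 1/2, by norm_num, by norm_num, ?_⟩
    intro x _ _ k
    subst hn
    have h1 : x k = 0 := Subsingleton.elim _ _
    have h0 : x 0 = 0 := Subsingleton.elim _ _
    rw [h1, h0, norm_zero]
    positivity
  · have hne : (Finset.univ : Finset (Fin n)).Nonempty := ⟨⟨0, hn⟩, Finset.mem_univ _⟩
    set g := Finset.univ.inf' hne γ with hgdef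
    obtain ⟨i₀, -, hgi⟩ := Finset.exists_mem_eq_inf' hne γ
    have hg0 : 0 < g := by rw [← hgdef] at hgi; rw [hgi]; exact hγ i₀
    have hB0 : ∀ k i, 0 ≤ ∑ j, β k i j :=
      fun k i => Finset.sum_nonneg fun j _ => hβ0 k i j
    have hgle : h * g ≤ 1 := by
      have h1 := hbound 0 i₀
      have hB := hB0 0 i₀
      nlinarith
    have hη0 : 0 ≤ 1 - h * g := by linarith
    have hη1 : 1 - h * g < 1 := by nlinarith
    refine ⟨1, one_pos, 1 - h * g, hη0, hη1, ?_⟩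
    intro x hdyn hx0 k
    have hinv : ∀ k i, 0 ≤ x k i ∧ x k i ≤ 1 := by
      intro k
      induction k with
      | zero => intro i; exact ⟨(hx0 i).1, (hx0 i).2⟩
      | succ k ih =>
        intro i
        have hS0 : 0 ≤ ∑ j, β k i j * x k j :=
          Finset.sum_nonneg fun j _ => mul_nonneg (hβ0 k i j) (ih j).1
        have hSB : ∑ j, β k i j * x k j ≤ ∑ j, β k i j := by
          apply Finset.sum_le_sum
          intro j _
          nlinarith [(ih j).2, (ih j).1, hβ0 k i j]
        have heq : x (k+1) i = (1 - h * ((∑ j, β k i j) + γ i)) * x k i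
            + h * (1 - x k i) * (∑ j, β k i j * x k j) := by
          rw [hdyn k i]; ring
        have hb := hbound k i
        have hB := hB0 k i
        have hxi0 := (ih i).1
        have hxi1 := (ih i).2
        constructor
        · rw [heq]
          have := mul_nonneg (by linarith : (0:ℝ) ≤ 1 - h * ((∑ j, β k i j) + γ i)) hxi0
          have := mul_nonneg (mul_nonneg hh.le (by linarith : (0:ℝ) ≤ 1 - x k i)) hS0
          linarith
        · rw [heq]
          have hγi := hγ i
          nlinarith [mul_nonneg hh.le hS0, mul_le_mul_of_nonneg_left hSB
            (mul_nonneg hh.le (by linarith : (0:ℝ) ≤ 1 - x k i))]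
    have hdec : ∀ k, ‖x (k+1)‖ ≤ (1 - h * g) * ‖x k‖ := by
      intro k
      have hM0 : 0 ≤ ‖x k‖ := norm_nonneg _
      have hle : ∀ j, x k j ≤ ‖x k‖ := fun j =>
        le_trans (le_abs_self _) ((Real.norm_eq_abs _) ▸ norm_le_pi_norm (x k) j)
      rw [pi_norm_le_iff_of_nonneg (mul_nonneg hη0 hM0)]
      intro i
      rw [Real.norm_eq_abs, abs_of_nonneg (hinv (k+1) i).1]
      have hgi' : g ≤ γ i := Finset.inf'_le _ (Finset.mem_univ i)
      have heq : x (k+1) i = (1 - h * ((∑ j, β k i j) + γ i)) * x k i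
          + h * (1 - x k i) * (∑ j, β k i j * x k j) := by
        rw [hdyn k i]; ring
      have hS0 : 0 ≤ ∑ j, β k i j * x k j :=
        Finset.sum_nonneg fun j _ => mul_nonneg (hβ0 k i j) (hinv k j).1
      have hSBM : ∑ j, β k i j * x k j ≤ (∑ j, β k i j) * ‖x k‖ := by
        rw [Finset.sum_mul]
        apply Finset.sum_le_sum
        intro j _
        exact mul_le_mul_of_nonneg_left (hle j) (hβ0 k i j)
      have hb := hbound k i
      have hB := hB0 k i
      have hxi0 := (hinv k i).1
      have hxi1 := (hinv k i).2
      have hxiM := hle i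
      rw [heq]
      nlinarith [mul_le_mul_of_nonneg_right hxiM
          (by linarith : (0:ℝ) ≤ 1 - h * ((∑ j, β k i j) + γ i)),
        mul_le_mul_of_nonneg_left hSBM
          (mul_nonneg hh.le (by linarith : (0:ℝ) ≤ 1 - x k i)),
        mul_nonneg (mul_nonneg hh.le hxi0) hS0,
        mul_le_mul_of_nonneg_right hgi' (mul_nonneg hh.le hM0),
        mul_nonneg hh.le (mul_nonneg hB hM0)]
    induction k with
    | zero => simp
    | succ k ih =>
      calc ‖x (k+1)‖ ≤ (1 - h * g) * ‖x k‖ := hdec k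
        _ ≤ (1 - h * g) * (1 * ‖x 0‖ * (1 - h * g) ^ k) :=
            mul_le_mul_of_nonneg_left ih hη0
        _ = 1 * ‖x 0‖ * (1 - h * g) ^ (k+1) := by ring
end
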